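/- arXiv:1710.06281 — 7 statements merged into one kernel-verified Lean document; each statement's English description precedes it below -/
import Mathlib

section
/- The sequence {δ_n} is well defined and satisfies 0 < δ_{n+1} < δ_n ≤ δ₀ for every n ≥ 0, and lim_{n→∞} δ_n = 0. -/
open Set Filter Topology

/-- The sequence `{δ n}` defined by `δ 0 = δ₀`, `q n = (ψ₂ - ψ₁)(δ n)`,
`δ (n+1) = δ n - q n` is well defined: it satisfies `0 < δ (n+1) < δ n ≤ δ₀`
for every `n`, and `δ n → 0`. -/
theorem cusp_scale_sequence_well_defined
    (δ₀ : ℝ) (hδ₀ : 0 < δ₀)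
    (ψ₁ ψ₂ : ℝ → ℝ)
    (hψ₁C1 : ContDiffOn ℝ 1 ψ₁ (Icc 0 δ₀))
    (hψ₂C1 : ContDiffOn ℝ 1 ψ₂ (Icc 0 δ₀))
    (hψ₁0 : ψ₁ 0 = 0) (hψ₂0 : ψ₂ 0 = 0)
    (hlt : ∀ x ∈ Ioc 0 δ₀, ψ₁ x < ψ₂ x)
    (hψ₁' : ∀ x ∈ Icc 0 δ₀, |derivWithin ψ₁ (Icc 0 δ₀) x| < 1 / 2)
    (hψ₂' : ∀ x ∈ Icc 0 δ₀, |derivWithin ψ₂ (Icc 0 δ₀) x| < 1 / 2)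
    (δ : ℕ → ℝ)
    (hδ0 : δ 0 = δ₀)
    (hδrec : ∀ n, δ (n + 1) = δ n - (ψ₂ (δ n) - ψ₁ (δ n))) :
    (∀ n, 0 < δ (n + 1) ∧ δ (n + 1) < δ n ∧ δ n ≤ δ₀) ∧
      Tendsto δ atTop (𝓝 0) := by
  set s : Set ℝ := Icc 0 δ₀ with hs_def
  have hconv : Convex ℝ s := convex_Icc _ _
  have hud : UniqueDiffOn ℝ s := uniqueDiffOn_Icc hδ₀
  have hd1 : DifferentiableOn ℝ ψ₁ s := hψ₁C1.differentiableOn one_ne_zero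
  have hd2 : DifferentiableOn ℝ ψ₂ s := hψ₂C1.differentiableOn one_ne_zero
  set g : ℝ → ℝ := fun x => ψ₂ x - ψ₁ x with hg_def
  have hdg : DifferentiableOn ℝ g s := hd2.sub hd1
  have hcg : ContinuousOn g s := hdg.continuousOn
  -- continuity of the derivatives
  have hc1 : ContinuousOn (derivWithin ψ₁ s) s :=
    (hψ₁C1.derivWithin (m := 0) hud (by norm_num)).continuousOn
  have hc2 : ContinuousOn (derivWithin ψ₂ s) s :=
    (hψ₂C1.derivWithin (m := 0) hud (by norm_num)).continuousOn
  -- max of |ψ₁'| + |ψ₂'| on the compact set s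
  have hsne : s.Nonempty := ⟨0, le_rfl, hδ₀.le⟩
  obtain ⟨y, hy, hymax⟩ := (isCompact_Icc (a := (0:ℝ)) (b := δ₀)).exists_isMaxOn hsne
    ((hc1.abs.add hc2.abs))
  have hymax := hymax
  set C : ℝ := |derivWithin ψ₁ s y| + |derivWithin ψ₂ s y| with hC_def
  have hC0 : 0 ≤ C := add_nonneg (abs_nonneg _) (abs_nonneg _)
  have hC1 : C < 1 := by
    have := hψ₁' y hy
    have := hψ₂' y hy
    simp only [hC_def]
    linarith
  have hbound : ∀ x ∈ s, ‖derivWithin g s x‖ ≤ C := by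
    intro x hx
    have hder : derivWithin g s x = derivWithin ψ₂ s x - derivWithin ψ₁ s x :=
      derivWithin_sub (hd2 x hx) (hd1 x hx)
    have := hymax hx
    calc ‖derivWithin g s x‖ = |derivWithin ψ₂ s x - derivWithin ψ₁ s x| := by
            rw [hder]; rfl
      _ ≤ |derivWithin ψ₂ s x| + |derivWithin ψ₁ s x| := abs_sub _ _
      _ ≤ C := by simpa [hC_def, add_comm] using this
  have key : ∀ x ∈ Ioc (0:ℝ) δ₀, 0 < g x ∧ g x < x := by
    intro x hx
    have hxs : x ∈ s := ⟨hx.1.le, hx.2⟩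
    have h0s : (0:ℝ) ∈ s := ⟨le_rfl, hδ₀.le⟩
    refine ⟨sub_pos.mpr (hlt x hx), ?_⟩
    have := hconv.norm_image_sub_le_of_norm_derivWithin_le hdg hbound h0s hxs
    have hgx : |g x| ≤ C * x := by
      have hg0 : g 0 = 0 := by simp [hg_def, hψ₁0, hψ₂0]
      simpa [hg0, abs_of_pos hx.1, Real.norm_eq_abs] using this
    calc g x ≤ |g x| := le_abs_self _
      _ ≤ C * x := hgx
      _ < 1 * x := by exact mul_lt_mul_of_pos_right hC1 hx.1
      _ = x := one_mul x
  have mem : ∀ n, δ n ∈ Ioc (0:ℝ) δ₀ := by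
    intro n
    induction n with
    | zero => exact ⟨by rw [hδ0]; exact hδ₀, by rw [hδ0]⟩
    | succ n ih =>
      obtain ⟨h1, h2⟩ := key (δ n) ih
      simp only [hg_def] at h1 h2
      rw [hδrec n]
      exact ⟨by linarith, by linarith [ih.2]⟩
  have part1 : ∀ n, 0 < δ (n + 1) ∧ δ (n + 1) < δ n ∧ δ n ≤ δ₀ := by
    intro n
    obtain ⟨h1, h2⟩ := key (δ n) (mem n)
    simp only [hg_def] at h1 h2
    exact ⟨(mem (n+1)).1, by rw [hδrec n]; linarith, (mem n).2⟩
  refine ⟨part1, ?_⟩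
  -- limit
  have hanti : Antitone δ := antitone_nat_of_succ_le fun n => (part1 n).2.1.le
  have hbdd : BddBelow (range δ) := ⟨0, by rintro _ ⟨n, rfl⟩; exact (mem n).1.le⟩
  have hL : Tendsto δ atTop (𝓝 (⨅ n, δ n)) := tendsto_atTop_ciInf hanti hbdd
  set L : ℝ := ⨅ n, δ n with hL_def
  have hL0 : 0 ≤ L := le_ciInf fun n => (mem n).1.le
  have hLδ₀ : L ≤ δ₀ := le_trans (ciInf_le hbdd 0) (by rw [hδ0])
  have hLzero : L = 0 := by
    by_contra h
    have hLpos : 0 < L := lt_of_le_of_ne hL0 (Ne.symm h)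
    have hLIoc : L ∈ Ioc (0:ℝ) δ₀ := ⟨hLpos, hLδ₀⟩
    have hLs : L ∈ s := ⟨hL0, hLδ₀⟩
    have htendw : Tendsto δ atTop (𝓝[s] L) :=
      tendsto_nhdsWithin_of_tendsto_nhds_of_eventually_within δ hL
        (Eventually.of_forall fun n => ⟨(mem n).1.le, (mem n).2⟩)
    have hgL : Tendsto (fun n => g (δ n)) atTop (𝓝 (g L)) :=
      (hcg L hLs).tendsto.comp htendw
    have ht1 : Tendsto (fun n => δ (n + 1)) atTop (𝓝 L) :=
      hL.comp (tendsto_add_atTop_nat 1)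
    have ht2 : Tendsto (fun n => δ n - g (δ n)) atTop (𝓝 (L - g L)) :=
      hL.sub hgL
    have heq : (fun n => δ (n + 1)) = fun n => δ n - g (δ n) := by
      funext n; exact hδrec n
    rw [heq] at ht1
    have : L = L - g L := tendsto_nhds_unique ht1 ht2
    have := (key L hLIoc).1
    linarith
  rw [hLzero] at hL
  exact hL
end

section
/- lim_{n→∞} q_n / δ_n = 0. -/
open Set Filter Topology

/-- Under the cusp condition `(ψ₂ - ψ₁)(x)/x → 0` as `x → 0⁺`, the sequence
`q n / δ n → 0`, where `q n = (ψ₂ - ψ₁)(δ n)` and `δ (n+1) = δ n - q n`. -/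
theorem cusp_scale_ratio_tendsto_zero
    (δ₀ : ℝ) (hδ₀ : 0 < δ₀)
    (ψ₁ ψ₂ : ℝ → ℝ)
    (hψ₁C1 : ContDiffOn ℝ 1 ψ₁ (Icc 0 δ₀))
    (hψ₂C1 : ContDiffOn ℝ 1 ψ₂ (Icc 0 δ₀))
    (hψ₁0 : ψ₁ 0 = 0) (hψ₂0 : ψ₂ 0 = 0)
    (hlt : ∀ x ∈ Ioc 0 δ₀, ψ₁ x < ψ₂ x)
    (hψ₁' : ∀ x ∈ Icc 0 δ₀, |derivWithin ψ₁ (Icc 0 δ₀) x| < 1 / 2)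
    (hψ₂' : ∀ x ∈ Icc 0 δ₀, |derivWithin ψ₂ (Icc 0 δ₀) x| < 1 / 2)
    (hcusp : Tendsto (fun x => (ψ₂ x - ψ₁ x) / x) (𝓝[>] (0 : ℝ)) (𝓝 0))
    (δ : ℕ → ℝ)
    (hδ0 : δ 0 = δ₀)
    (hδrec : ∀ n, δ (n + 1) = δ n - (ψ₂ (δ n) - ψ₁ (δ n))) :
    Tendsto (fun n => (ψ₂ (δ n) - ψ₁ (δ n)) / δ n) atTop (𝓝 0) := by
  set s : Set ℝ := Icc 0 δ₀ with hs
  have hsu : UniqueDiffOn ℝ s := uniqueDiffOn_Icc hδ₀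
  have hd₁ : DifferentiableOn ℝ ψ₁ s := hψ₁C1.differentiableOn one_ne_zero
  have hd₂ : DifferentiableOn ℝ ψ₂ s := hψ₂C1.differentiableOn one_ne_zero
  -- a uniform bound C < 1 on the derivative of ψ₂ - ψ₁
  have hgcont : ContinuousOn
      (fun x => |derivWithin ψ₁ s x| + |derivWithin ψ₂ s x|) s := by
    exact ((hψ₁C1.continuousOn_derivWithin hsu le_rfl).abs.add
      (hψ₂C1.continuousOn_derivWithin hsu le_rfl).abs)
  obtain ⟨x₀, hx₀, hmax⟩ := isCompact_Icc.exists_isMaxOn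
    (⟨0, ⟨le_rfl, hδ₀.le⟩⟩ : s.Nonempty) hgcont
  set C : ℝ := |derivWithin ψ₁ s x₀| + |derivWithin ψ₂ s x₀| with hC
  have hC0 : 0 ≤ C := by positivity
  have hC1 : C < 1 := by
    have := hψ₁' x₀ hx₀; have := hψ₂' x₀ hx₀; simp only [hC]; linarith
  -- key quantitative bound: ψ₂ x - ψ₁ x ≤ C * x on s
  have hbound : ∀ x ∈ s, ψ₂ x - ψ₁ x ≤ C * x := by
    intro x hx
    have hdf : DifferentiableOn ℝ (fun y => ψ₂ y - ψ₁ y) s := hd₂.sub hd₁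
    have hkey : ∀ y ∈ s, ‖derivWithin (fun y => ψ₂ y - ψ₁ y) s y‖ ≤ C := by
      intro y hy
      rw [derivWithin_fun_sub (hd₂ y hy) (hd₁ y hy)]
      calc ‖derivWithin ψ₂ s y - derivWithin ψ₁ s y‖
          ≤ |derivWithin ψ₁ s y| + |derivWithin ψ₂ s y| := by
            rw [Real.norm_eq_abs]
            have := abs_sub (derivWithin ψ₂ s y) (derivWithin ψ₁ s y)
            linarith [abs_sub (derivWithin ψ₂ s y) (derivWithin ψ₁ s y)]
        _ ≤ C := hmax hy
    have := (convex_Icc (0:ℝ) δ₀).norm_image_sub_le_of_norm_derivWithin_le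
      hdf hkey (⟨le_rfl, hδ₀.le⟩ : (0:ℝ) ∈ s) hx
    rw [hψ₁0, hψ₂0] at this
    simp only [sub_zero, Real.norm_eq_abs] at this
    calc ψ₂ x - ψ₁ x ≤ |ψ₂ x - ψ₁ x| := le_abs_self _
      _ ≤ C * |x| := this
      _ = C * x := by rw [abs_of_nonneg hx.1]
  -- invariant: 0 < δ n ≤ δ₀
  have hinv : ∀ n, 0 < δ n ∧ δ n ≤ δ₀ := by
    intro n
    induction n with
    | zero => exact ⟨by rw [hδ0]; exact hδ₀, le_of_eq hδ0⟩
    | succ n ih =>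
      obtain ⟨h1, h2⟩ := ih
      have hmem : δ n ∈ s := ⟨h1.le, h2⟩
      have hq : 0 < ψ₂ (δ n) - ψ₁ (δ n) := sub_pos.mpr (hlt _ ⟨h1, h2⟩)
      have hqle : ψ₂ (δ n) - ψ₁ (δ n) < δ n :=
        lt_of_le_of_lt (hbound _ hmem) (by nlinarith)
      constructor
      · rw [hδrec]; linarith
      · rw [hδrec]; linarith
  -- δ is antitone and converges to its infimum L
  have hanti : Antitone δ := by
    apply antitone_nat_of_succ_le
    intro n
    have hq : 0 < ψ₂ (δ n) - ψ₁ (δ n) :=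
      sub_pos.mpr (hlt _ ⟨(hinv n).1, (hinv n).2⟩)
    rw [hδrec]; linarith
  have hbdd : BddBelow (Set.range δ) := ⟨0, by rintro _ ⟨n, rfl⟩; exact (hinv n).1.le⟩
  set L : ℝ := ⨅ n, δ n with hL
  have hδL : Tendsto δ atTop (𝓝 L) := tendsto_atTop_ciInf hanti hbdd
  have hL0 : 0 ≤ L := le_ciInf fun n => (hinv n).1.le
  have hLδ₀ : L ≤ δ₀ := le_trans (ciInf_le hbdd 0) (le_of_eq hδ0)
  -- L = 0
  have hLzero : L = 0 := by
    by_contra hne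
    have hLpos : 0 < L := lt_of_le_of_ne hL0 (Ne.symm hne)
    have hLmem : L ∈ s := ⟨hL0, hLδ₀⟩
    have hcont : ContinuousOn (fun x => ψ₂ x - ψ₁ x) s :=
      (hψ₂C1.continuousOn).sub (hψ₁C1.continuousOn)
    have hδLs : Tendsto δ atTop (𝓝[s] L) :=
      tendsto_nhdsWithin_of_tendsto_nhds_of_eventually_within δ hδL
        (Eventually.of_forall fun n => ⟨(hinv n).1.le, (hinv n).2⟩)
    have h1 : Tendsto (fun n => ψ₂ (δ n) - ψ₁ (δ n)) atTop (𝓝 (ψ₂ L - ψ₁ L)) :=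
      ((hcont L hLmem).tendsto).comp hδLs
    have h2 : Tendsto (fun n => ψ₂ (δ n) - ψ₁ (δ n)) atTop (𝓝 0) := by
      have : Tendsto (fun n => δ n - δ (n + 1)) atTop (𝓝 (L - L)) :=
        hδL.sub (hδL.comp (tendsto_add_atTop_nat 1))
      rw [sub_self] at this
      refine this.congr fun n => ?_
      rw [hδrec]; ring
    have := tendsto_nhds_unique h1 h2
    have := hlt L ⟨hLpos, hLδ₀⟩
    linarith
  -- conclude by composing with the cusp condition
  have hδ0' : Tendsto δ atTop (𝓝[>] (0:ℝ)) := by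
    rw [← hLzero]
    refine tendsto_nhdsWithin_of_tendsto_nhds_of_eventually_within δ hδL
      (Eventually.of_forall fun n => ?_)
    rw [hLzero]
    exact (hinv n).1
  exact hcusp.comp hδ0'
end

section
/- For every compact set K ⊂ ℝ there is N such that for all n ≥ N and all u ∈ K one has q_n u + δ_{n+1} ∈ (0, δ₀), and moreover lim_{n→∞} sup_{u∈K} |ψ₁(q_n u + δ_{n+1})/q_n − L| = 0. -/
open Set Filter Topology

/-- The rescaled lower boundary `u ↦ ψ₁(q_n u + δ_{n+1})/q_n` converges
uniformly on compact sets to the constant `L`: for every compact `K ⊆ ℝ`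
eventually `q_n u + δ_{n+1} ∈ (0, δ₀)` for all `u ∈ K`, and
`sup_{u ∈ K} |ψ₁(q_n u + δ_{n+1})/q_n - L| → 0`. -/
theorem rescaled_lower_boundary_tendsto
    (δ₀ : ℝ) (hδ₀ : 0 < δ₀)
    (ψ₁ ψ₂ : ℝ → ℝ)
    (hψ₁C1 : ContDiffOn ℝ 1 ψ₁ (Icc 0 δ₀))
    (hψ₂C1 : ContDiffOn ℝ 1 ψ₂ (Icc 0 δ₀))
    (hψ₁0 : ψ₁ 0 = 0) (hψ₂0 : ψ₂ 0 = 0)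
    (hlt : ∀ x ∈ Ioc 0 δ₀, ψ₁ x < ψ₂ x)
    (hψ₁' : ∀ x ∈ Icc 0 δ₀, |derivWithin ψ₁ (Icc 0 δ₀) x| < 1 / 2)
    (hψ₂' : ∀ x ∈ Icc 0 δ₀, |derivWithin ψ₂ (Icc 0 δ₀) x| < 1 / 2)
    (hcusp : Tendsto (fun x => (ψ₂ x - ψ₁ x) / x) (𝓝[>] (0 : ℝ)) (𝓝 0))
    (L : ℝ)
    (hL : Tendsto (fun x => ψ₁ x / (ψ₂ x - ψ₁ x)) (𝓝[>] (0 : ℝ)) (𝓝 L))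
    (δ : ℕ → ℝ) (q : ℕ → ℝ)
    (hδ0 : δ 0 = δ₀)
    (hq : ∀ n, q n = ψ₂ (δ n) - ψ₁ (δ n))
    (hδrec : ∀ n, δ (n + 1) = δ n - q n) :
    ∀ K : Set ℝ, IsCompact K →
      (∃ N : ℕ, ∀ n ≥ N, ∀ u ∈ K, q n * u + δ (n + 1) ∈ Ioo 0 δ₀) ∧
        Tendsto (fun n => ⨆ u ∈ K, |ψ₁ (q n * u + δ (n + 1)) / q n - L|)
          atTop (𝓝 0) := by
  intro K hK
  have hs : UniqueDiffOn ℝ (Icc (0:ℝ) δ₀) := uniqueDiffOn_Icc hδ₀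
  have h0mem : (0:ℝ) ∈ Icc (0:ℝ) δ₀ := ⟨le_rfl, hδ₀.le⟩
  set g₁ : ℝ → ℝ := derivWithin ψ₁ (Icc 0 δ₀) with hg₁def
  have hdiff₁ : DifferentiableOn ℝ ψ₁ (Icc 0 δ₀) := hψ₁C1.differentiableOn one_ne_zero
  have hdiff₂ : DifferentiableOn ℝ ψ₂ (Icc 0 δ₀) := hψ₂C1.differentiableOn one_ne_zero
  have cont₁ : ContinuousOn g₁ (Icc 0 δ₀) := hψ₁C1.continuousOn_derivWithin hs le_rfl
  have cont₂ : ContinuousOn (derivWithin ψ₂ (Icc 0 δ₀)) (Icc 0 δ₀) :=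
    hψ₂C1.continuousOn_derivWithin hs le_rfl
  -- maximum of |g₁|, |g₂| on the compact interval
  obtain ⟨x₁, hx₁, hmax₁⟩ := isCompact_Icc.exists_isMaxOn (f := fun x => |g₁ x|)
    ⟨0, h0mem⟩ cont₁.abs
  obtain ⟨x₂, hx₂, hmax₂⟩ := isCompact_Icc.exists_isMaxOn
    (f := fun x => |derivWithin ψ₂ (Icc 0 δ₀) x|) ⟨0, h0mem⟩ cont₂.abs
  set c₁ := |g₁ x₁| with hc₁def
  set c₂ := |derivWithin ψ₂ (Icc 0 δ₀) x₂| with hc₂def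
  have hc₁ : c₁ < 1 / 2 := hψ₁' x₁ hx₁
  have hc₂ : c₂ < 1 / 2 := hψ₂' x₂ hx₂
  have hc₁0 : 0 ≤ c₁ := abs_nonneg _
  have hc₂0 : 0 ≤ c₂ := abs_nonneg _
  -- Lipschitz-type bound from MVT
  have hb₁ : ∀ x ∈ Icc (0:ℝ) δ₀, |ψ₁ x| ≤ c₁ * x := by
    intro x hx
    have := (convex_Icc (0:ℝ) δ₀).norm_image_sub_le_of_norm_derivWithin_le hdiff₁
      (fun y hy => by rw [Real.norm_eq_abs]; exact hmax₁ hy) h0mem hx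
    simpa [hψ₁0, Real.norm_eq_abs, abs_of_nonneg hx.1] using this
  have hb₂ : ∀ x ∈ Icc (0:ℝ) δ₀, |ψ₂ x| ≤ c₂ * x := by
    intro x hx
    have := (convex_Icc (0:ℝ) δ₀).norm_image_sub_le_of_norm_derivWithin_le hdiff₂
      (fun y hy => by rw [Real.norm_eq_abs]; exact hmax₂ hy) h0mem hx
    simpa [hψ₂0, Real.norm_eq_abs, abs_of_nonneg hx.1] using this
  have hsub : ∀ x ∈ Icc (0:ℝ) δ₀, ψ₂ x - ψ₁ x ≤ c₁ * x + c₂ * x := by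
    intro x hx
    have h1 := abs_le.mp (hb₁ x hx)
    have h2 := abs_le.mp (hb₂ x hx)
    linarith [h1.1, h2.2]
  -- the sequence δ stays in (0, δ₀]
  have hmem : ∀ n, δ n ∈ Ioc (0:ℝ) δ₀ := by
    intro n
    induction n with
    | zero => rw [hδ0]; exact ⟨hδ₀, le_rfl⟩
    | succ n ih =>
      have hqn : 0 < q n := by rw [hq]; exact sub_pos.mpr (hlt _ ih)
      have hqle : q n ≤ c₁ * δ n + c₂ * δ n := by
        rw [hq]; exact hsub _ (Ioc_subset_Icc_self ih)
      rw [hδrec]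
      constructor
      · nlinarith [ih.1]
      · linarith [ih.2]
  have hqpos : ∀ n, 0 < q n := fun n => by rw [hq]; exact sub_pos.mpr (hlt _ (hmem n))
  have hanti : Antitone δ := antitone_nat_of_succ_le fun n => by
    rw [hδrec]; linarith [hqpos n]
  -- δ tends to 0
  have hbdd : BddBelow (range δ) := ⟨0, by rintro _ ⟨n, rfl⟩; exact (hmem n).1.le⟩
  have hlimc : Tendsto δ atTop (𝓝 (⨅ n, δ n)) := tendsto_atTop_ciInf hanti hbdd
  set c := ⨅ n, δ n with hcdef
  have hc0 : 0 ≤ c := le_ciInf fun n => (hmem n).1.le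
  have hcδ₀ : c ≤ δ₀ := by
    have := ciInf_le hbdd 0
    rwa [hδ0] at this
  have hq0 : Tendsto q atTop (𝓝 0) := by
    have h1 : Tendsto (fun n => δ n - δ (n + 1)) atTop (𝓝 (c - c)) :=
      hlimc.sub (hlimc.comp (tendsto_add_atTop_nat 1))
    rw [sub_self] at h1
    exact h1.congr fun n => by rw [hδrec]; ring
  have hδin : Tendsto δ atTop (𝓝[Icc 0 δ₀] c) :=
    tendsto_nhdsWithin_of_tendsto_nhds_of_eventually_within _ hlimc
      (Eventually.of_forall fun n => Ioc_subset_Icc_self (hmem n))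
  have hqc : Tendsto q atTop (𝓝 (ψ₂ c - ψ₁ c)) := by
    have hcont : ContinuousWithinAt (fun x => ψ₂ x - ψ₁ x) (Icc 0 δ₀) c :=
      (hψ₂C1.continuousOn.sub hψ₁C1.continuousOn) c ⟨hc0, hcδ₀⟩
    exact (hcont.tendsto.comp hδin).congr fun n => (hq n).symm
  have hceq : c = 0 := by
    by_contra h
    have hcpos : 0 < c := lt_of_le_of_ne hc0 (Ne.symm h)
    have := tendsto_nhds_unique hqc hq0
    have := hlt c ⟨hcpos, hcδ₀⟩
    linarith
  have hδlim : Tendsto δ atTop (𝓝 0) := by rwa [hceq] at hlimc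
  have hδlim' : Tendsto δ atTop (𝓝[>] (0:ℝ)) :=
    tendsto_nhdsWithin_of_tendsto_nhds_of_eventually_within _ hδlim
      (Eventually.of_forall fun n => (hmem n).1)
  have hqδ0 : Tendsto (fun n => q n / δ n) atTop (𝓝 0) :=
    (hcusp.comp hδlim').congr fun n => by simp only [Function.comp_apply]; rw [hq]
  have hLn : Tendsto (fun n => ψ₁ (δ n) / q n) atTop (𝓝 L) :=
    (hL.comp hδlim').congr fun n => by simp only [Function.comp_apply]; rw [hq]
  -- bound on K
  obtain ⟨M, hMK⟩ := hK.isBounded.subset_closedBall 0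
  set A := max M 0 + 2 with hAdef
  have hApos : (0:ℝ) < A := by
    have := le_max_right M (0:ℝ); simp only [hAdef]; linarith
  have hA : ∀ u ∈ K, |u - 1| ≤ A := by
    intro u hu
    have hu' : |u| ≤ M := by
      have := hMK hu
      rwa [Metric.mem_closedBall, Real.dist_eq, sub_zero] at this
    have h1 := (abs_le.mp hu').1
    have h2 := (abs_le.mp hu').2
    have h3 := le_max_left M (0:ℝ)
    rw [abs_le]; constructor <;> simp only [hAdef] <;> linarith
  -- key eventual membership
  have key : ∀ η : ℝ, 0 < η → ∀ᶠ n in atTop, ∀ u ∈ K,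
      0 < q n * u + δ (n + 1) ∧ q n * u + δ (n + 1) ≤ η := by
    intro η hη
    have h1 : ∀ᶠ n in atTop, q n / δ n < 1 / (2 * A) :=
      hqδ0.eventually_lt_const (by positivity)
    have h2 : ∀ᶠ n in atTop, δ n < η / 2 := hδlim.eventually_lt_const (by positivity)
    filter_upwards [h1, h2] with n hn1 hn2 u hu
    have hδn := (hmem n).1
    have hqn := hqpos n
    have hq2 : q n * (2 * A) < δ n := by
      have := (div_lt_div_iff₀ hδn (by positivity : (0:ℝ) < 2 * A)).mp hn1
      linarith
    have habs : |q n * (u - 1)| ≤ δ n / 2 := by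
      rw [abs_mul, abs_of_pos hqn]
      have := mul_le_mul_of_nonneg_left (hA u hu) hqn.le
      linarith
    have hxeq : q n * u + δ (n + 1) = δ n + q n * (u - 1) := by rw [hδrec]; ring
    have hl := neg_abs_le (q n * (u - 1))
    have hr := le_abs_self (q n * (u - 1))
    constructor
    · rw [hxeq]; linarith
    · rw [hxeq]; linarith
  constructor
  · obtain ⟨N, hN⟩ := eventually_atTop.mp (key (δ₀ / 2) (by linarith))
    exact ⟨N, fun n hn u hu => ⟨(hN n hn u hu).1, lt_of_le_of_lt (hN n hn u hu).2 (by linarith)⟩⟩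
  -- the derivative of ψ₁ vanishes at 0
  have hg10 : g₁ 0 = 0 := by
    have hd : HasDerivWithinAt ψ₁ (g₁ 0) (Icc 0 δ₀) 0 :=
      (hdiff₁ 0 h0mem).hasDerivWithinAt
    rw [hasDerivWithinAt_iff_tendsto_slope, Icc_diff_left,
      nhdsWithin_Ioc_eq_nhdsGT hδ₀] at hd
    have h3 : Tendsto (fun x => ψ₁ x / x) (𝓝[>] (0:ℝ)) (𝓝 (g₁ 0)) := by
      refine hd.congr' ?_
      filter_upwards [self_mem_nhdsWithin] with x hx
      rw [slope_def_field, hψ₁0, sub_zero, sub_zero]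
    have h2 : Tendsto (fun x => ψ₁ x / x) (𝓝[>] (0:ℝ)) (𝓝 0) := by
      have hmul := hL.mul hcusp
      rw [mul_zero] at hmul
      refine hmul.congr' ?_
      filter_upwards [Ioc_mem_nhdsGT_of_mem ⟨le_rfl, hδ₀⟩] with x hx
      have hne : ψ₂ x - ψ₁ x ≠ 0 := (sub_pos.mpr (hlt x hx)).ne'
      have hxne : x ≠ 0 := hx.1.ne'
      field_simp
    exact tendsto_nhds_unique h3 h2
  -- the convergence of the sup
  rw [NormedAddCommGroup.tendsto_nhds_zero]
  intro ε hε
  have hε' : (0:ℝ) < ε / (4 * A) := by positivity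
  -- find η where |g₁| < ε/(4A)
  have hcont0 : Tendsto g₁ (𝓝[Icc 0 δ₀] (0:ℝ)) (𝓝 0) := by
    have := cont₁ 0 h0mem
    rwa [ContinuousWithinAt, hg10] at this
  have hev : ∀ᶠ x in 𝓝[Icc (0:ℝ) δ₀] (0:ℝ), |g₁ x| < ε / (4 * A) :=
    hcont0.eventually (by simpa using eventually_abs_sub_lt (0:ℝ) hε')
  obtain ⟨r, hr, hball⟩ := Metric.mem_nhdsWithin_iff.mp hev
  set η := min (r / 2) δ₀ with hηdef
  have hηpos : 0 < η := lt_min (by linarith) hδ₀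
  have hηδ : η ≤ δ₀ := min_le_right _ _
  have hsub' : Icc (0:ℝ) η ⊆ Icc 0 δ₀ := Icc_subset_Icc le_rfl hηδ
  have hgsmall : ∀ x ∈ Icc (0:ℝ) η, |g₁ x| < ε / (4 * A) := by
    intro x hx
    refine hball ⟨?_, hsub' hx⟩
    rw [Metric.mem_ball, Real.dist_eq, sub_zero, abs_of_nonneg hx.1]
    have := hx.2
    have : x ≤ r / 2 := le_trans this (min_le_left _ _)
    linarith
  -- Lipschitz estimate on [0, η]
  have hlip : ∀ a ∈ Icc (0:ℝ) η, ∀ b ∈ Icc (0:ℝ) η,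
      |ψ₁ b - ψ₁ a| ≤ ε / (4 * A) * |b - a| := by
    intro a ha b hb
    have hdiffη : DifferentiableOn ℝ ψ₁ (Icc 0 η) := hdiff₁.mono hsub'
    have hbound : ∀ x ∈ Icc (0:ℝ) η, ‖derivWithin ψ₁ (Icc 0 η) x‖ ≤ ε / (4 * A) := by
      intro x hx
      rw [Real.norm_eq_abs,
        derivWithin_subset hsub' ((uniqueDiffOn_Icc hηpos) x hx) (hdiff₁ x (hsub' hx))]
      exact (hgsmall x hx).le
    have := (convex_Icc (0:ℝ) η).norm_image_sub_le_of_norm_derivWithin_le hdiffη hbound ha hb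
    simpa [Real.norm_eq_abs] using this
  have hLev : ∀ᶠ n in atTop, |ψ₁ (δ n) / q n - L| < ε / 2 := by
    have := (Metric.tendsto_nhds.mp hLn) (ε / 2) (by linarith)
    filter_upwards [this] with n hn
    rwa [Real.dist_eq] at hn
  filter_upwards [key η hηpos, hLev, hδlim.eventually_lt_const hηpos] with n hx hL' hδη
  have hqn := hqpos n
  have hb : ∀ u ∈ K, |ψ₁ (q n * u + δ (n + 1)) / q n - L| ≤ ε / (4 * A) * A + ε / 2 := by
    intro u hu
    obtain ⟨hx1, hx2⟩ := hx u hu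
    set x := q n * u + δ (n + 1) with hxdef
    have hxm : x ∈ Icc (0:ℝ) η := ⟨hx1.le, hx2⟩
    have hδm : δ n ∈ Icc (0:ℝ) η := ⟨(hmem n).1.le, hδη.le⟩
    have h1 : |ψ₁ x - ψ₁ (δ n)| ≤ ε / (4 * A) * |x - δ n| := hlip _ hδm _ hxm
    have hxd : x - δ n = q n * (u - 1) := by rw [hxdef, hδrec]; ring
    have h2 : |x - δ n| ≤ q n * A := by
      rw [hxd, abs_mul, abs_of_pos hqn]
      exact mul_le_mul_of_nonneg_left (hA u hu) hqn.le
    have h3 : |ψ₁ x - ψ₁ (δ n)| ≤ ε / (4 * A) * (q n * A) :=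
      h1.trans (mul_le_mul_of_nonneg_left h2 hε'.le)
    have heq : ψ₁ x / q n - L = (ψ₁ x - ψ₁ (δ n)) / q n + (ψ₁ (δ n) / q n - L) := by
      field_simp; ring
    calc |ψ₁ x / q n - L| = |(ψ₁ x - ψ₁ (δ n)) / q n + (ψ₁ (δ n) / q n - L)| := by rw [heq]
      _ ≤ |(ψ₁ x - ψ₁ (δ n)) / q n| + |ψ₁ (δ n) / q n - L| := abs_add_le _ _
      _ ≤ ε / (4 * A) * A + ε / 2 := by
          refine add_le_add ?_ hL'.le
          rw [abs_div, abs_of_pos hqn, div_le_iff₀ hqn]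
          calc |ψ₁ x - ψ₁ (δ n)| ≤ ε / (4 * A) * (q n * A) := h3
            _ = ε / (4 * A) * A * q n := by ring
    -- end calc
  have hnn : 0 ≤ ⨆ u ∈ K, |ψ₁ (q n * u + δ (n + 1)) / q n - L| :=
    Real.iSup_nonneg fun u => Real.iSup_nonneg fun _ => abs_nonneg _
  have hsup : (⨆ u ∈ K, |ψ₁ (q n * u + δ (n + 1)) / q n - L|) ≤ ε / (4 * A) * A + ε / 2 := by
    refine Real.iSup_le (fun u => Real.iSup_le (fun hu => hb u hu) (by positivity)) (by positivity)
  rw [Real.norm_eq_abs, abs_of_nonneg hnn]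
  have hAA : ε / (4 * A) * A = ε / 4 := by field_simp
  rw [hAA] at hsup
  linarith
end

section
/- For every compact set K ⊂ ℝ there is N such that for all n ≥ N and all u ∈ K one has q_n u + δ_{n+1} ∈ (0, δ₀), and moreover lim_{n→∞} sup_{u∈K} |ψ₂(q_n u + δ_{n+1})/q_n − (L+1)| = 0. -/
open Set Filter Topology

/-- The rescaled upper boundary `u ↦ ψ₂(q_n u + δ_{n+1})/q_n` converges
uniformly on compact sets to the constant `L + 1`: for every compact `K ⊆ ℝ`
eventually `q_n u + δ_{n+1} ∈ (0, δ₀)` for all `u ∈ K`, and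
`sup_{u ∈ K} |ψ₂(q_n u + δ_{n+1})/q_n - (L + 1)| → 0`. -/
theorem rescaled_upper_boundary_tendsto
    (δ₀ : ℝ) (hδ₀ : 0 < δ₀)
    (ψ₁ ψ₂ : ℝ → ℝ)
    (hψ₁C1 : ContDiffOn ℝ 1 ψ₁ (Icc 0 δ₀))
    (hψ₂C1 : ContDiffOn ℝ 1 ψ₂ (Icc 0 δ₀))
    (hψ₁0 : ψ₁ 0 = 0) (hψ₂0 : ψ₂ 0 = 0)
    (hlt : ∀ x ∈ Ioc 0 δ₀, ψ₁ x < ψ₂ x)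
    (hψ₁' : ∀ x ∈ Icc 0 δ₀, |derivWithin ψ₁ (Icc 0 δ₀) x| < 1 / 2)
    (hψ₂' : ∀ x ∈ Icc 0 δ₀, |derivWithin ψ₂ (Icc 0 δ₀) x| < 1 / 2)
    (hcusp : Tendsto (fun x => (ψ₂ x - ψ₁ x) / x) (𝓝[>] (0 : ℝ)) (𝓝 0))
    (L : ℝ)
    (hL : Tendsto (fun x => ψ₁ x / (ψ₂ x - ψ₁ x)) (𝓝[>] (0 : ℝ)) (𝓝 L))
    (δ : ℕ → ℝ) (q : ℕ → ℝ)
    (hδ0 : δ 0 = δ₀)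
    (hq : ∀ n, q n = ψ₂ (δ n) - ψ₁ (δ n))
    (hδrec : ∀ n, δ (n + 1) = δ n - q n) :
    ∀ K : Set ℝ, IsCompact K →
      (∃ N : ℕ, ∀ n ≥ N, ∀ u ∈ K, q n * u + δ (n + 1) ∈ Ioo 0 δ₀) ∧
        Tendsto (fun n => ⨆ u ∈ K, |ψ₂ (q n * u + δ (n + 1)) / q n - (L + 1)|)
          atTop (𝓝 0) := by
  intro K hK
  set I : Set ℝ := Icc 0 δ₀ with hI
  have hI0 : (0:ℝ) ∈ I := ⟨le_rfl, hδ₀.le⟩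
  have hUD : UniqueDiffOn ℝ I := uniqueDiffOn_Icc hδ₀
  have hψ₁d : DifferentiableOn ℝ ψ₁ I := hψ₁C1.differentiableOn one_ne_zero
  have hψ₂d : DifferentiableOn ℝ ψ₂ I := hψ₂C1.differentiableOn one_ne_zero
  -- the difference g and its Lipschitz-type bound with constant c < 1
  set g : ℝ → ℝ := fun x => ψ₂ x - ψ₁ x with hg
  set d₁ : ℝ → ℝ := derivWithin ψ₁ I with hd₁
  set d₂ : ℝ → ℝ := derivWithin ψ₂ I with hd₂
  have hd₁c : ContinuousOn d₁ I := hψ₁C1.continuousOn_derivWithin hUD le_rfl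
  have hd₂c : ContinuousOn d₂ I := hψ₂C1.continuousOn_derivWithin hUD le_rfl
  have hIc : IsCompact I := isCompact_Icc
  have hIne : I.Nonempty := ⟨0, hI0⟩
  obtain ⟨x₀, hx₀I, hx₀'⟩ :=
    hIc.exists_isMaxOn hIne ((hd₁c.abs).add (hd₂c.abs))
  have hx₀ : ∀ y ∈ I, |d₁ y| + |d₂ y| ≤ |d₁ x₀| + |d₂ x₀| := fun y hy => hx₀' hy
  set c : ℝ := |d₁ x₀| + |d₂ x₀| with hc
  have hc1 : c < 1 := by
    have := hψ₁' x₀ hx₀I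
    have := hψ₂' x₀ hx₀I
    simp only [hc]; linarith
  have hc0 : 0 ≤ c := by positivity
  have hgbound : ∀ x ∈ I, |g x| ≤ c * x := by
    intro x hx
    have hmvt : ‖g x - g 0‖ ≤ c * ‖x - 0‖ := by
      refine Convex.norm_image_sub_le_of_norm_hasDerivWithin_le
        (f' := fun y => d₂ y - d₁ y) (fun y hy => ((hψ₂d y hy).hasDerivWithinAt).sub
          ((hψ₁d y hy).hasDerivWithinAt)) (fun y hy => ?_) (convex_Icc _ _) hI0 hx
      have := hx₀ y hy
      calc ‖d₂ y - d₁ y‖ ≤ |d₂ y| + |d₁ y| := abs_sub _ _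
        _ ≤ c := by simp only [hc] at *; linarith
    have hg0 : g 0 = 0 := by simp [hg, hψ₁0, hψ₂0]
    rw [hg0, sub_zero, sub_zero, Real.norm_eq_abs, Real.norm_eq_abs] at hmvt
    calc |g x| ≤ c * |x| := hmvt
      _ = c * x := by rw [abs_of_nonneg hx.1]
  -- membership of δ n in (0, δ₀]
  have hδmem : ∀ n, δ n ∈ Ioc 0 δ₀ := by
    intro n
    induction n with
    | zero => rw [hδ0]; exact ⟨hδ₀, le_rfl⟩
    | succ n ih =>
      have hqn : q n = g (δ n) := hq n
      have hqpos : 0 < q n := by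
        rw [hqn]; exact sub_pos.2 (hlt _ ih)
      have hqlt : q n < δ n := by
        have := hgbound (δ n) ⟨ih.1.le, ih.2⟩
        have h2 : |g (δ n)| ≤ c * δ n := this
        have : g (δ n) ≤ c * δ n := (le_abs_self _).trans h2
        have hcδ : c * δ n < 1 * δ n := by
          exact mul_lt_mul_of_pos_right hc1 ih.1
        rw [hqn]; linarith
      rw [hδrec n]
      constructor
      · linarith
      · have := ih.2; linarith
  have hδpos : ∀ n, 0 < δ n := fun n => (hδmem n).1
  have hqpos : ∀ n, 0 < q n := fun n => by
    rw [hq n]; exact sub_pos.2 (hlt _ (hδmem n))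
  have hδanti : Antitone δ := antitone_nat_of_succ_le (fun n => by
    rw [hδrec n]; linarith [hqpos n])
  -- δ n → 0
  have hδlim : Tendsto δ atTop (𝓝 0) := by
    have hbdd : BddBelow (range δ) := ⟨0, by rintro _ ⟨n, rfl⟩; exact (hδpos n).le⟩
    have hconv := tendsto_atTop_ciInf hδanti hbdd
    set ℓ : ℝ := ⨅ n, δ n with hℓ
    have hℓ0 : 0 ≤ ℓ := le_ciInf (fun n => (hδpos n).le)
    have hℓI : ℓ ∈ I := ⟨hℓ0, le_trans (ciInf_le hbdd 0) (by rw [hδ0])⟩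
    have hqlim : Tendsto q atTop (𝓝 0) := by
      have : Tendsto (fun n => δ n - δ (n+1)) atTop (𝓝 (ℓ - ℓ)) :=
        (hconv.sub (hconv.comp (tendsto_add_atTop_nat 1)))
      rw [sub_self] at this
      refine this.congr (fun n => ?_)
      rw [hδrec n]; ring
    have hgcont : ContinuousOn g I := (hψ₂C1.continuousOn).sub (hψ₁C1.continuousOn)
    have hδwithin : Tendsto δ atTop (𝓝[I] ℓ) := by
      refine tendsto_nhdsWithin_of_tendsto_nhds_of_eventually_within _ hconv ?_
      exact Eventually.of_forall (fun n => ⟨(hδpos n).le, (hδmem n).2⟩)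
    have : Tendsto (fun n => g (δ n)) atTop (𝓝 (g ℓ)) :=
      (hgcont ℓ hℓI).tendsto.comp hδwithin
    have hgℓ : g ℓ = 0 := by
      have heq : (fun n => g (δ n)) = q := by funext n; exact (hq n).symm
      rw [heq] at this
      exact tendsto_nhds_unique this hqlim
    have hℓeq : ℓ = 0 := by
      by_contra h
      have : 0 < ℓ := lt_of_le_of_ne hℓ0 (Ne.symm h)
      have := hlt ℓ ⟨this, hℓI.2⟩
      simp only [hg] at hgℓ; linarith
    rwa [hℓeq] at hconv
  have hδin : Tendsto δ atTop (𝓝[>] (0:ℝ)) :=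
    tendsto_nhdsWithin_of_tendsto_nhds_of_eventually_within _ hδlim
      (Eventually.of_forall (fun n => hδpos n))
  -- q n / δ n → 0
  have hqδ : Tendsto (fun n => q n / δ n) atTop (𝓝 0) := by
    have := hcusp.comp hδin
    refine this.congr (fun n => ?_)
    simp only [Function.comp_apply, hq n]
  -- ψ₂(δ n)/q n → L + 1
  have hE : Tendsto (fun n => ψ₂ (δ n) / q n) atTop (𝓝 (L + 1)) := by
    have h1 : Tendsto (fun n => ψ₁ (δ n) / q n) atTop (𝓝 L) := by
      have := hL.comp hδin
      refine this.congr (fun n => ?_)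
      simp only [Function.comp_apply, hq n]
    have := h1.add (tendsto_const_nhds (x := (1:ℝ)))
    refine this.congr (fun n => ?_)
    have hqn := (hqpos n).ne'
    field_simp
    rw [hq n]; ring
  -- d₂ 0 = 0
  have hψ₂overx : Tendsto (fun x => ψ₂ x / x) (𝓝[>] (0:ℝ)) (𝓝 0) := by
    have hev : ∀ᶠ x in 𝓝[>] (0:ℝ), x ∈ Ioc 0 δ₀ := by
      have : Ioc (0:ℝ) δ₀ ∈ 𝓝[>] (0:ℝ) :=
        mem_nhdsWithin.2 ⟨Iio δ₀, isOpen_Iio, hδ₀, by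
          rintro x ⟨hx1, hx2⟩; exact ⟨hx2, le_of_lt hx1⟩⟩
      exact this
    have hrat : Tendsto (fun x => ψ₂ x / (ψ₂ x - ψ₁ x)) (𝓝[>] (0:ℝ)) (𝓝 (L + 1)) := by
      have := hL.add (tendsto_const_nhds (x := (1:ℝ)))
      refine Tendsto.congr' ?_ this
      filter_upwards [hev] with x hx
      have hg0 : ψ₂ x - ψ₁ x ≠ 0 := ne_of_gt (sub_pos.2 (hlt x hx))
      field_simp; ring
    have := hcusp.mul hrat
    rw [zero_mul] at this
    refine Tendsto.congr' ?_ this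
    filter_upwards [hev, self_mem_nhdsWithin] with x hx hx0
    have hg0 : ψ₂ x - ψ₁ x ≠ 0 := ne_of_gt (sub_pos.2 (hlt x hx))
    have hx0' : (x:ℝ) ≠ 0 := ne_of_gt hx0
    field_simp
  have hd₂0 : d₂ 0 = 0 := by
    have hder : HasDerivWithinAt ψ₂ (d₂ 0) I 0 := (hψ₂d 0 hI0).hasDerivWithinAt
    have hslope : Tendsto (slope ψ₂ 0) (𝓝[I \ {0}] (0:ℝ)) (𝓝 (d₂ 0)) :=
      hasDerivWithinAt_iff_tendsto_slope.1 hder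
    have hset : I \ {(0:ℝ)} = Ioc 0 δ₀ := Icc_diff_left
    rw [hset, nhdsWithin_Ioc_eq_nhdsGT hδ₀] at hslope
    have hslope' : Tendsto (slope ψ₂ 0) (𝓝[>] (0:ℝ)) (𝓝 0) := by
      refine Tendsto.congr' ?_ hψ₂overx
      filter_upwards [self_mem_nhdsWithin] with x hx
      rw [slope_def_field]
      rw [hψ₂0, sub_zero, sub_zero]
    exact tendsto_nhds_unique hslope hslope'
  -- bound on K
  obtain ⟨M₀, hM₀⟩ := hK.isBounded.exists_norm_le
  set M : ℝ := max M₀ 0 with hM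
  have hM0 : 0 ≤ M := le_max_right _ _
  have hMK : ∀ u ∈ K, |u| ≤ M := fun u hu =>
    le_trans (hM₀ u hu) (le_max_left _ _)
  -- key eventual bound
  have hkey : ∀ᶠ n in atTop, q n * (M + 2) < δ n / 2 := by
    have hpos : (0:ℝ) < 1 / (2 * (M + 2)) := by positivity
    filter_upwards [hqδ.eventually_lt_const hpos] with n hn
    have hδn := hδpos n
    have : q n < δ n * (1 / (2 * (M + 2))) := by
      rwa [div_lt_iff₀ hδn, mul_comm] at hn
    have hM2 : (0:ℝ) < M + 2 := by linarith
    calc q n * (M + 2) < (δ n * (1 / (2 * (M + 2)))) * (M + 2) :=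
          mul_lt_mul_of_pos_right this hM2
      _ = δ n / 2 := by field_simp
  -- position of the rescaled point
  have hpoint : ∀ n, q n * (M + 2) < δ n / 2 → ∀ u ∈ K,
      δ n / 2 < q n * u + δ (n + 1) ∧ q n * u + δ (n + 1) < 2 * δ n := by
    intro n hn u hu
    have h1 : |q n * u + δ (n + 1) - δ n| ≤ q n * (M + 1) := by
      rw [hδrec n]
      have : q n * u + (δ n - q n) - δ n = q n * (u - 1) := by ring
      rw [this, abs_mul, abs_of_nonneg (hqpos n).le]
      have : |u - 1| ≤ M + 1 := by
        have := hMK u hu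
        have := abs_sub_abs_le_abs_sub u 1
        have h2 := abs_sub (u) (1:ℝ)
        calc |u - 1| ≤ |u| + |1| := abs_sub _ _
          _ ≤ M + 1 := by rw [abs_one]; linarith [hMK u hu]
      exact mul_le_mul_of_nonneg_left this (hqpos n).le
    have h2 : q n * (M + 1) < δ n / 2 := by
      have := hqpos n; nlinarith
    have h3 := abs_le.1 h1
    constructor
    · nlinarith [h3.1]
    · nlinarith [h3.2]
  constructor
  · -- first part
    have hev2 : ∀ᶠ n in atTop, δ n < δ₀ / 2 := hδlim.eventually_lt_const (by positivity)
    obtain ⟨N, hN⟩ := (hkey.and hev2).exists_forall_of_atTop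
    refine ⟨N, fun n hn u hu => ?_⟩
    obtain ⟨h1, h2⟩ := hN n hn
    obtain ⟨ha, hb⟩ := hpoint n h1 u hu
    exact ⟨lt_trans (by linarith [hδpos n]) ha, by linarith⟩
  · -- second part
    rw [Metric.tendsto_atTop]
    intro ε hε
    set ε₁ : ℝ := ε / (2 * (M + 2)) with hε₁def
    have hε₁ : 0 < ε₁ := by positivity
    -- find r from continuity of d₂ at 0
    have hd₂cw : Tendsto d₂ (𝓝[I] (0:ℝ)) (𝓝 0) := by
      have := (hd₂c 0 hI0).tendsto
      rwa [hd₂0] at this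
    have habs : ∀ᶠ ξ in 𝓝[I] (0:ℝ), |d₂ ξ| < ε₁ := by
      have : Tendsto (fun ξ => |d₂ ξ|) (𝓝[I] (0:ℝ)) (𝓝 |0|) := hd₂cw.abs
      rw [abs_zero] at this
      exact this.eventually_lt_const hε₁
    obtain ⟨r, hr0, hr⟩ := Metric.mem_nhdsWithin_iff.1 habs
    -- choose N
    have hev3 : ∀ᶠ n in atTop, δ n < min (r / 2) (δ₀ / 2) :=
      hδlim.eventually_lt_const (by positivity)
    have hev4 : ∀ᶠ n in atTop, |ψ₂ (δ n) / q n - (L + 1)| < ε₁ := by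
      have := hE
      rw [Metric.tendsto_atTop] at this
      obtain ⟨N, hN⟩ := this ε₁ hε₁
      rw [eventually_atTop]
      exact ⟨N, fun n hn => by have := hN n hn; rwa [Real.dist_eq] at this⟩
    obtain ⟨N, hN⟩ := ((hkey.and hev3).and hev4).exists_forall_of_atTop
    refine ⟨N, fun n hn => ?_⟩
    obtain ⟨⟨h1, h2⟩, h3⟩ := hN n hn
    have hδr : δ n < r / 2 := lt_of_lt_of_le h2 (min_le_left _ _)
    have hδ2 : δ n < δ₀ / 2 := lt_of_lt_of_le h2 (min_le_right _ _)
    -- per-point bound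
    have hbound : ∀ u ∈ K, |ψ₂ (q n * u + δ (n + 1)) / q n - (L + 1)| ≤ ε / 2 := by
      intro u hu
      obtain ⟨ha, hb⟩ := hpoint n h1 u hu
      set x : ℝ := q n * u + δ (n + 1) with hx
      have hx0 : 0 < x := lt_trans (by linarith [hδpos n]) ha
      have hxδ₀ : x ≤ δ₀ := by linarith
      have hxr : x < r := by linarith
      set s : Set ℝ := I ∩ Metric.ball 0 r with hs
      have hconv : Convex ℝ s := (convex_Icc _ _).inter (convex_ball _ _)
      have hxs : x ∈ s := ⟨⟨hx0.le, hxδ₀⟩, by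
        rw [Metric.mem_ball, Real.dist_eq, sub_zero, abs_of_pos hx0]; exact hxr⟩
      have hδs : δ n ∈ s := ⟨⟨(hδpos n).le, (hδmem n).2⟩, by
        rw [Metric.mem_ball, Real.dist_eq, sub_zero, abs_of_pos (hδpos n)]
        linarith⟩
      have hmvt : ‖ψ₂ x - ψ₂ (δ n)‖ ≤ ε₁ * ‖x - δ n‖ := by
        refine Convex.norm_image_sub_le_of_norm_hasDerivWithin_le
          (f' := d₂) (fun y hy => ((hψ₂d y hy.1).hasDerivWithinAt).mono inter_subset_left)
          (fun y hy => ?_) hconv hδs hxs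
        rw [Real.norm_eq_abs]
        exact le_of_lt (hr ⟨hy.2, hy.1⟩)
      rw [Real.norm_eq_abs, Real.norm_eq_abs] at hmvt
      have hxd : |x - δ n| ≤ q n * (M + 1) := by
        rw [hx, hδrec n]
        have heq : q n * u + (δ n - q n) - δ n = q n * (u - 1) := by ring
        rw [heq, abs_mul, abs_of_nonneg (hqpos n).le]
        refine mul_le_mul_of_nonneg_left ?_ (hqpos n).le
        calc |u - 1| ≤ |u| + |1| := abs_sub _ _
          _ ≤ M + 1 := by rw [abs_one]; linarith [hMK u hu]
      have hterm1 : |ψ₂ x - ψ₂ (δ n)| / q n ≤ ε₁ * (M + 1) := by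
        rw [div_le_iff₀ (hqpos n)]
        calc |ψ₂ x - ψ₂ (δ n)| ≤ ε₁ * |x - δ n| := hmvt
          _ ≤ ε₁ * (q n * (M + 1)) := mul_le_mul_of_nonneg_left hxd hε₁.le
          _ = ε₁ * (M + 1) * q n := by ring
      have hsplit : ψ₂ x / q n - (L + 1) =
          (ψ₂ x - ψ₂ (δ n)) / q n + (ψ₂ (δ n) / q n - (L + 1)) := by
        have := (hqpos n).ne'
        field_simp; ring
      rw [hsplit]
      calc |(ψ₂ x - ψ₂ (δ n)) / q n + (ψ₂ (δ n) / q n - (L + 1))|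
          ≤ |(ψ₂ x - ψ₂ (δ n)) / q n| + |ψ₂ (δ n) / q n - (L + 1)| := abs_add_le _ _
        _ ≤ ε₁ * (M + 1) + ε₁ := by
            rw [abs_div, abs_of_pos (hqpos n)]
            exact add_le_add hterm1 h3.le
        _ = ε₁ * (M + 2) := by ring
        _ = ε / 2 := by rw [hε₁def]; field_simp
    -- sup bound
    have hsup_le : (⨆ u ∈ K, |ψ₂ (q n * u + δ (n + 1)) / q n - (L + 1)|) ≤ ε / 2 := by
      refine Real.iSup_le (fun u => Real.iSup_le (fun hu => hbound u hu) (by linarith)) (by linarith)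
    have hsup_nonneg : 0 ≤ ⨆ u ∈ K, |ψ₂ (q n * u + δ (n + 1)) / q n - (L + 1)| := by
      refine Real.iSup_nonneg (fun u => Real.iSup_nonneg (fun _ => abs_nonneg _))
    rw [Real.dist_eq, sub_zero, abs_of_nonneg hsup_nonneg]
    linarith
end

section
/- The domains rescaled around the point (δ_{n+1}, 0) at scale q_n converge to the horizontal strip ℝ × [L, L+1] in the following sense: for every u ∈ ℝ and every v ∈ ℝ with L < v < L+1, there is N such that for all n ≥ N the point (q_n u + δ_{n+1}, q_n v) lies in D̄ and in fact ψ₁(q_n u + δ_{n+1}) < q_n v < ψ₂(q_n u + δ_{n+1}); and for every u ∈ ℝ and every v with v < L or v > L+1, there is N such that for all n ≥ N the point (q_n u + δ_{n+1}, q_n v) does not lie in D̄. -/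
open Set Filter Topology

private lemma aux_sup {δ₀ : ℝ} (hδ₀ : 0 < δ₀) {f : ℝ → ℝ}
    (hf : ContDiffOn ℝ 1 f (Icc 0 δ₀))
    (hb : ∀ x ∈ Icc 0 δ₀, |derivWithin f (Icc 0 δ₀) x| < 1 / 2) :
    ∃ C, 0 ≤ C ∧ C < 1 / 2 ∧ ∀ x ∈ Icc 0 δ₀, |derivWithin f (Icc 0 δ₀) x| ≤ C := by
  have hcont : ContinuousOn (fun x => |derivWithin f (Icc 0 δ₀) x|) (Icc 0 δ₀) :=
    (hf.continuousOn_derivWithin (uniqueDiffOn_Icc hδ₀) le_rfl).abs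
  obtain ⟨x₀, hx₀, hmax⟩ :=
    isCompact_Icc.exists_isMaxOn (nonempty_Icc.2 hδ₀.le) hcont
  exact ⟨|derivWithin f (Icc 0 δ₀) x₀|, abs_nonneg _, hb x₀ hx₀, fun x hx => hmax hx⟩

private lemma aux_lipschitz {δ₀ : ℝ} {f : ℝ → ℝ} {C : ℝ}
    (hf : ContDiffOn ℝ 1 f (Icc 0 δ₀))
    (hC : ∀ x ∈ Icc 0 δ₀, |derivWithin f (Icc 0 δ₀) x| ≤ C)
    {a b : ℝ} (ha : a ∈ Icc 0 δ₀) (hb : b ∈ Icc 0 δ₀) :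
    |f b - f a| ≤ C * |b - a| :=
  Convex.norm_image_sub_le_of_norm_derivWithin_le (hf.differentiableOn one_ne_zero)
    hC (convex_Icc _ _) ha hb

private lemma aux_deriv0 {δ₀ : ℝ} (hδ₀ : 0 < δ₀) {f : ℝ → ℝ}
    (hf : ContDiffOn ℝ 1 f (Icc 0 δ₀)) (hf0 : f 0 = 0)
    (h : Tendsto (fun x => f x / x) (𝓝[>] (0:ℝ)) (𝓝 0)) :
    derivWithin f (Icc 0 δ₀) 0 = 0 := by
  have hmem : (0:ℝ) ∈ Icc 0 δ₀ := ⟨le_refl 0, hδ₀.le⟩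
  have hd := ((hf.differentiableOn one_ne_zero) 0 hmem).hasDerivWithinAt
  rw [hasDerivWithinAt_iff_tendsto_slope] at hd
  have hset : Icc (0:ℝ) δ₀ \ {0} = Ioc 0 δ₀ := by
    ext y
    simp only [mem_diff, mem_Icc, mem_singleton_iff, mem_Ioc]
    constructor
    · rintro ⟨⟨h1, h2⟩, h3⟩
      exact ⟨lt_of_le_of_ne h1 (Ne.symm h3), h2⟩
    · rintro ⟨h1, h2⟩
      exact ⟨⟨h1.le, h2⟩, ne_of_gt h1⟩
  rw [hset, nhdsWithin_Ioc_eq_nhdsGT hδ₀] at hd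
  have h' : Tendsto (slope f 0) (𝓝[>] (0:ℝ)) (𝓝 0) := by
    refine h.congr' ?_
    filter_upwards [self_mem_nhdsWithin] with y hy
    rw [slope_def_field, hf0, sub_zero, sub_zero]
  exact tendsto_nhds_unique hd h'

private lemma aux_small {δ₀ : ℝ} (hδ₀ : 0 < δ₀) {f : ℝ → ℝ}
    (hf : ContDiffOn ℝ 1 f (Icc 0 δ₀)) (h0 : derivWithin f (Icc 0 δ₀) 0 = 0)
    {ε : ℝ} (hε : 0 < ε) :
    ∃ η > 0, ∀ a ∈ Icc 0 δ₀, ∀ b ∈ Icc 0 δ₀, a ≤ η → b ≤ η →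
      |f b - f a| ≤ ε * |b - a| := by
  have hcont := hf.continuousOn_derivWithin (uniqueDiffOn_Icc hδ₀) le_rfl
  have h1 : Tendsto (derivWithin f (Icc 0 δ₀)) (𝓝[Icc 0 δ₀] 0) (𝓝 0) := by
    have h2 := hcont 0 ⟨le_refl 0, hδ₀.le⟩
    rwa [ContinuousWithinAt, h0] at h2
  have hball : ∀ᶠ y : ℝ in 𝓝 0, |y| ≤ ε := by
    filter_upwards [Metric.closedBall_mem_nhds (0:ℝ) hε] with y hy
    simpa [Real.dist_eq] using hy
  have h2 := h1.eventually hball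
  rw [eventually_iff, Metric.mem_nhdsWithin_iff] at h2
  obtain ⟨r, hr, hrsub⟩ := h2
  refine ⟨min (r/2) δ₀, by positivity, ?_⟩
  intro a ha b hb ha' hb'
  set s := Icc (0:ℝ) (min (r/2) δ₀) with hs
  have hssub : s ⊆ Icc 0 δ₀ := Icc_subset_Icc le_rfl (min_le_right _ _)
  have hbound : ∀ y ∈ s, ‖derivWithin f (Icc 0 δ₀) y‖ ≤ ε := by
    intro y hy
    refine hrsub ⟨?_, hssub hy⟩
    rw [Metric.mem_ball, Real.dist_eq, sub_zero, abs_of_nonneg hy.1]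
    exact lt_of_le_of_lt (le_trans hy.2 (min_le_left _ _)) (by linarith)
  have hder : ∀ y ∈ s, HasDerivWithinAt f (derivWithin f (Icc 0 δ₀) y) s y :=
    fun y hy => (((hf.differentiableOn one_ne_zero) y (hssub hy)).hasDerivWithinAt).mono hssub
  have hab := Convex.norm_image_sub_le_of_norm_hasDerivWithin_le hder hbound
    (convex_Icc _ _) (⟨ha.1, ha'⟩ : a ∈ s) (⟨hb.1, hb'⟩ : b ∈ s)
  simpa [Real.norm_eq_abs] using hab

/-- The domains rescaled around `(δ_{n+1}, 0)` at scale `q_n` converge to the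
horizontal strip `ℝ × [L, L+1]`: points `(u, v)` with `L < v < L + 1`
eventually correspond to interior points of `D̄`, and points with `v < L` or
`v > L + 1` eventually correspond to points outside `D̄`. -/
theorem rescaled_domains_converge_to_strip
    (δ₀ : ℝ) (hδ₀ : 0 < δ₀)
    (ψ₁ ψ₂ : ℝ → ℝ)
    (hψ₁C1 : ContDiffOn ℝ 1 ψ₁ (Icc 0 δ₀))
    (hψ₂C1 : ContDiffOn ℝ 1 ψ₂ (Icc 0 δ₀))
    (hψ₁0 : ψ₁ 0 = 0) (hψ₂0 : ψ₂ 0 = 0)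
    (hlt : ∀ x ∈ Ioc 0 δ₀, ψ₁ x < ψ₂ x)
    (hψ₁' : ∀ x ∈ Icc 0 δ₀, |derivWithin ψ₁ (Icc 0 δ₀) x| < 1 / 2)
    (hψ₂' : ∀ x ∈ Icc 0 δ₀, |derivWithin ψ₂ (Icc 0 δ₀) x| < 1 / 2)
    (hcusp : Tendsto (fun x => (ψ₂ x - ψ₁ x) / x) (𝓝[>] (0 : ℝ)) (𝓝 0))
    (L : ℝ)
    (hL : Tendsto (fun x => ψ₁ x / (ψ₂ x - ψ₁ x)) (𝓝[>] (0 : ℝ)) (𝓝 L))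
    (δ : ℕ → ℝ) (q : ℕ → ℝ)
    (hδ0 : δ 0 = δ₀)
    (hq : ∀ n, q n = ψ₂ (δ n) - ψ₁ (δ n))
    (hδrec : ∀ n, δ (n + 1) = δ n - q n)
    (Dbar : Set (ℝ × ℝ))
    (hDbar : Dbar = {p : ℝ × ℝ |
      0 ≤ p.1 ∧ p.1 ≤ δ₀ ∧ ψ₁ p.1 ≤ p.2 ∧ p.2 ≤ ψ₂ p.1}) :
    (∀ u v : ℝ, L < v → v < L + 1 →
      ∃ N : ℕ, ∀ n ≥ N,
        (q n * u + δ (n + 1), q n * v) ∈ Dbar ∧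
          ψ₁ (q n * u + δ (n + 1)) < q n * v ∧
          q n * v < ψ₂ (q n * u + δ (n + 1))) ∧
    (∀ u v : ℝ, v < L ∨ L + 1 < v →
      ∃ N : ℕ, ∀ n ≥ N, (q n * u + δ (n + 1), q n * v) ∉ Dbar) := by
  obtain ⟨K₁, hK₁0, hK₁lt, hK₁⟩ := aux_sup hδ₀ hψ₁C1 hψ₁'
  obtain ⟨K₂, hK₂0, hK₂lt, hK₂⟩ := aux_sup hδ₀ hψ₂C1 hψ₂'
  have h0mem : (0:ℝ) ∈ Icc 0 δ₀ := ⟨le_refl 0, hδ₀.le⟩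
  have hψ₁bd : ∀ x ∈ Icc 0 δ₀, |ψ₁ x| ≤ K₁ * x := by
    intro x hx
    have h := aux_lipschitz hψ₁C1 hK₁ h0mem hx
    rwa [hψ₁0, sub_zero, sub_zero, abs_of_nonneg hx.1] at h
  have hψ₂bd : ∀ x ∈ Icc 0 δ₀, |ψ₂ x| ≤ K₂ * x := by
    intro x hx
    have h := aux_lipschitz hψ₂C1 hK₂ h0mem hx
    rwa [hψ₂0, sub_zero, sub_zero, abs_of_nonneg hx.1] at h
  have hqsmall : ∀ x ∈ Icc 0 δ₀, ψ₂ x - ψ₁ x ≤ (K₁ + K₂) * x := by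
    intro x hx
    have h1 := (abs_le.1 (hψ₁bd x hx)).1
    have h2 := (abs_le.1 (hψ₂bd x hx)).2
    linarith
  have hδmem : ∀ n, 0 < δ n ∧ δ n ≤ δ₀ := by
    intro n
    induction n with
    | zero => exact ⟨by rw [hδ0]; exact hδ₀, le_of_eq hδ0⟩
    | succ n ih =>
      have hmem : δ n ∈ Icc 0 δ₀ := ⟨ih.1.le, ih.2⟩
      have hq1 : q n < δ n := by
        have h1 := hqsmall (δ n) hmem
        rw [hq n]
        nlinarith [ih.1]
      have hq0 : 0 < q n := by
        rw [hq n]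
        have := hlt (δ n) ⟨ih.1, ih.2⟩
        linarith
      exact ⟨by rw [hδrec n]; linarith, by rw [hδrec n]; linarith⟩
  have hqpos : ∀ n, 0 < q n := by
    intro n
    rw [hq n]
    have := hlt (δ n) ⟨(hδmem n).1, (hδmem n).2⟩
    linarith
  have hanti : Antitone δ :=
    antitone_nat_of_succ_le fun n => by rw [hδrec n]; linarith [hqpos n]
  have hbdd : BddBelow (range δ) := ⟨0, by rintro x ⟨n, rfl⟩; exact (hδmem n).1.le⟩
  have hδtend0 : Tendsto δ atTop (𝓝 0) := by
    have hlim := tendsto_atTop_ciInf hanti hbdd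
    set l := ⨅ n, δ n with hl
    have hl0 : 0 ≤ l := le_ciInf fun n => (hδmem n).1.le
    have hlδ₀ : l ≤ δ₀ := by
      have h := ciInf_le hbdd 0
      rw [hδ0] at h
      exact h
    have hq0' : Tendsto q atTop (𝓝 0) := by
      have h1 : Tendsto (fun n => δ n - δ (n+1)) atTop (𝓝 (l - l)) :=
        hlim.sub (hlim.comp (tendsto_add_atTop_nat 1))
      rw [sub_self] at h1
      exact h1.congr fun n => by rw [hδrec n]; ring
    have hgl : Tendsto q atTop (𝓝 (ψ₂ l - ψ₁ l)) := by
      have hcont : ContinuousOn (fun x => ψ₂ x - ψ₁ x) (Icc 0 δ₀) :=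
        (hψ₂C1.continuousOn).sub (hψ₁C1.continuousOn)
      have hδin : Tendsto δ atTop (𝓝[Icc 0 δ₀] l) :=
        tendsto_nhdsWithin_iff.2
          ⟨hlim, Eventually.of_forall fun n => ⟨(hδmem n).1.le, (hδmem n).2⟩⟩
      have h := (hcont l ⟨hl0, hlδ₀⟩).tendsto.comp hδin
      exact h.congr fun n => (hq n).symm
    have hgl0 : ψ₂ l - ψ₁ l = 0 := tendsto_nhds_unique hgl hq0'
    have hlz : l = 0 := by
      by_contra h
      have hlpos : 0 < l := lt_of_le_of_ne hl0 (Ne.symm h)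
      have := hlt l ⟨hlpos, hlδ₀⟩
      linarith
    rwa [hlz] at hlim
  have hδtendR : Tendsto δ atTop (𝓝[>] (0:ℝ)) :=
    tendsto_nhdsWithin_iff.2 ⟨hδtend0, Eventually.of_forall fun n => (hδmem n).1⟩
  have hqδ : Tendsto (fun n => q n / δ n) atTop (𝓝 0) := by
    have h := hcusp.comp hδtendR
    exact h.congr fun n => by simp only [Function.comp_apply]; rw [hq n]
  have hrL : Tendsto (fun n => ψ₁ (δ n) / q n) atTop (𝓝 L) := by
    have h := hL.comp hδtendR
    exact h.congr fun n => by simp only [Function.comp_apply]; rw [hq n]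
  have hψ₁x : Tendsto (fun x => ψ₁ x / x) (𝓝[>] (0:ℝ)) (𝓝 0) := by
    have h1 := hL.mul hcusp
    rw [mul_zero] at h1
    refine h1.congr' ?_
    filter_upwards [Ioc_mem_nhdsGT hδ₀] with x hx
    have hgx : ψ₂ x - ψ₁ x ≠ 0 := ne_of_gt (sub_pos.2 (hlt x hx))
    have hx0 : x ≠ 0 := ne_of_gt hx.1
    field_simp
  have hψ₂x : Tendsto (fun x => ψ₂ x / x) (𝓝[>] (0:ℝ)) (𝓝 0) := by
    have h1 := hψ₁x.add hcusp
    rw [add_zero] at h1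
    exact h1.congr fun x => by ring
  have hd₁ : derivWithin ψ₁ (Icc 0 δ₀) 0 = 0 := aux_deriv0 hδ₀ hψ₁C1 hψ₁0 hψ₁x
  have hd₂ : derivWithin ψ₂ (Icc 0 δ₀) 0 = 0 := aux_deriv0 hδ₀ hψ₂C1 hψ₂0 hψ₂x
  have hmain : ∀ u : ℝ,
      Tendsto (fun n => ψ₁ (q n * u + δ (n+1)) / q n) atTop (𝓝 L) ∧
      Tendsto (fun n => ψ₂ (q n * u + δ (n+1)) / q n) atTop (𝓝 (L+1)) ∧
      (∀ᶠ n in atTop, 0 ≤ q n * u + δ (n+1) ∧ q n * u + δ (n+1) ≤ δ₀) := by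
    intro u
    set x : ℕ → ℝ := fun n => q n * u + δ (n+1) with hxdef
    have hxeq : ∀ n, x n = δ n + q n * (u - 1) := fun n => by
      simp only [hxdef]; rw [hδrec n]; ring
    have hev1 : ∀ᶠ n in atTop, |x n - δ n| ≤ δ n / 2 := by
      have hsmall : ∀ᶠ n in atTop, q n / δ n < 1 / (2 * (|u - 1| + 1)) :=
        hqδ.eventually_lt_const (by positivity)
      filter_upwards [hsmall] with n hn
      have hδn := (hδmem n).1
      have hqn := hqpos n
      have h1 : q n * (2 * (|u-1|+1)) < δ n := by
        rw [div_lt_div_iff₀ hδn (by positivity)] at hn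
        linarith [hn]
      have h2 : q n * |u - 1| ≤ δ n / 2 := by
        nlinarith [abs_nonneg (u-1)]
      rw [hxeq n, show δ n + q n * (u-1) - δ n = q n * (u-1) by ring,
        abs_mul, abs_of_pos hqn]
      exact h2
    have hxmem : ∀ᶠ n in atTop, 0 < x n ∧ x n ≤ δ₀ ∧ x n ≤ 2 * δ n := by
      filter_upwards [hev1, hδtend0.eventually_lt_const (show (0:ℝ) < δ₀/2 by linarith)]
        with n h1 h2
      have hδn := (hδmem n).1
      obtain ⟨habl, habr⟩ := abs_le.1 h1
      rw [hxeq n] at habl habr ⊢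
      refine ⟨by linarith, by linarith, by linarith⟩
    have key : ∀ f : ℝ → ℝ, ContDiffOn ℝ 1 f (Icc 0 δ₀) →
        derivWithin f (Icc 0 δ₀) 0 = 0 →
        Tendsto (fun n => (f (x n) - f (δ n)) / q n) atTop (𝓝 0) := by
      intro f hf hf0
      rw [NormedAddCommGroup.tendsto_nhds_zero]
      intro ε hε
      obtain ⟨η, hη, hlip⟩ := aux_small hδ₀ hf hf0
        (show (0:ℝ) < ε / (2 * (|u-1|+1)) by positivity)
      filter_upwards [hev1, hxmem,
        hδtend0.eventually_lt_const (show (0:ℝ) < η/2 by linarith)] with n h1 h2 h3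
      have hδn := hδmem n
      have hqn := hqpos n
      have hδnIcc : δ n ∈ Icc 0 δ₀ := ⟨hδn.1.le, hδn.2⟩
      have hxIcc : x n ∈ Icc 0 δ₀ := ⟨h2.1.le, h2.2.1⟩
      have hxη : x n ≤ η := by linarith [h2.2.2]
      have hδη : δ n ≤ η := by linarith
      have hbd := hlip (δ n) hδnIcc (x n) hxIcc hδη hxη
      have habs : |x n - δ n| = q n * |u-1| := by
        rw [hxeq n, show δ n + q n * (u-1) - δ n = q n * (u-1) by ring,
          abs_mul, abs_of_pos hqn]
      rw [habs] at hbd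
      rw [Real.norm_eq_abs, abs_div, abs_of_pos hqn, div_lt_iff₀ hqn]
      calc |f (x n) - f (δ n)| ≤ ε / (2 * (|u-1|+1)) * (q n * |u-1|) := hbd
        _ < ε * q n := by
          rw [div_mul_eq_mul_div, div_lt_iff₀ (show (0:ℝ) < 2 * (|u-1|+1) by positivity)]
          nlinarith [abs_nonneg (u-1), mul_pos hε hqn]
    have h1tend : Tendsto (fun n => ψ₁ (x n) / q n) atTop (𝓝 L) := by
      have h := hrL.add (key ψ₁ hψ₁C1 hd₁)
      rw [add_zero] at h
      exact h.congr fun n => by ring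
    have h2tend : Tendsto (fun n => ψ₂ (x n) / q n) atTop (𝓝 (L+1)) := by
      have ha : Tendsto (fun n => ψ₂ (δ n) / q n) atTop (𝓝 (L+1)) := by
        have h := hrL.add (tendsto_const_nhds (x := (1:ℝ)))
        refine h.congr fun n => ?_
        have hqn := hqpos n
        field_simp
        rw [hq n]
        ring
      have h := ha.add (key ψ₂ hψ₂C1 hd₂)
      rw [add_zero] at h
      exact h.congr fun n => by ring
    exact ⟨h1tend, h2tend, hxmem.mono fun n hn => ⟨hn.1.le, hn.2.1⟩⟩
  constructor
  · intro u v hv1 hv2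
    obtain ⟨h1t, h2t, hmem⟩ := hmain u
    have e1 : ∀ᶠ n in atTop, ψ₁ (q n * u + δ (n+1)) / q n < v :=
      h1t.eventually_lt_const hv1
    have e2 : ∀ᶠ n in atTop, v < ψ₂ (q n * u + δ (n+1)) / q n :=
      h2t.eventually_const_lt hv2
    obtain ⟨N, hN⟩ := eventually_atTop.1 ((e1.and e2).and hmem)
    refine ⟨N, fun n hn => ?_⟩
    obtain ⟨⟨he1, he2⟩, hm1, hm2⟩ := hN n hn
    have hqn := hqpos n
    have hlt1 : ψ₁ (q n * u + δ (n+1)) < q n * v := by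
      rw [div_lt_iff₀ hqn] at he1
      linarith
    have hlt2 : q n * v < ψ₂ (q n * u + δ (n+1)) := by
      rw [lt_div_iff₀ hqn] at he2
      linarith
    refine ⟨?_, hlt1, hlt2⟩
    rw [hDbar]
    exact ⟨hm1, hm2, hlt1.le, hlt2.le⟩
  · intro u v hv
    obtain ⟨h1t, h2t, _⟩ := hmain u
    rcases hv with hv | hv
    · have e1 : ∀ᶠ n in atTop, v < ψ₁ (q n * u + δ (n+1)) / q n :=
        h1t.eventually_const_lt hv
      obtain ⟨N, hN⟩ := eventually_atTop.1 e1
      refine ⟨N, fun n hn hmemD => ?_⟩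
      rw [hDbar] at hmemD
      obtain ⟨_, _, h3, _⟩ := hmemD
      have hqn := hqpos n
      have := hN n hn
      rw [lt_div_iff₀ hqn] at this
      simp only at h3
      linarith
    · have e2 : ∀ᶠ n in atTop, ψ₂ (q n * u + δ (n+1)) / q n < v :=
        h2t.eventually_lt_const hv
      obtain ⟨N, hN⟩ := eventually_atTop.1 e2
      refine ⟨N, fun n hn hmemD => ?_⟩
      rw [hDbar] at hmemD
      obtain ⟨_, _, _, h4⟩ := hmemD
      have hqn := hqpos n
      have := hN n hn
      rw [div_lt_iff₀ hqn] at this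
      simp only at h4
      linarith
end

section
/- Let d ≥ 1, let S ⊆ ℝ^d, let e* ∈ ℝ^d with |e*| = 1, let r* > 0, and let γ : S → ℝ^d. Assume there are constants c₁ > 0 and c₂ > 0 such that ⟨e*, γ(x)⟩ ≥ c₁ for every x ∈ S with ⟨e*, x⟩ ≤ 2r*, and there is a C² function φ₃ : ℝ^d → ℝ such that ⟨∇φ₃(x), γ(x)⟩ ≥ c₂ and φ₃(x) ≥ 2r* for every x ∈ S with ⟨e*, x⟩ ≥ r*. Let χ : ℝ → [0,1] be a C² nonincreasing function with χ(r) = 1 for r ≤ 0 and χ(r) = 0 for r ≥ 1. Then the function φ(x) := ⟨e*, x⟩ χ((⟨e*, x⟩ − r*)/r*) + (1 − χ((⟨e*, x⟩ − r*)/r*)) φ₃(x) is C² on ℝ^d and satisfies ⟨∇φ(x), γ(x)⟩ ≥ min(c₁, c₂) > 0 for every x ∈ S. -/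
open Set RealInnerProductSpace

private lemma antitone_deriv_nonpos {χ : ℝ → ℝ} (h : Antitone χ)
    (hd : DifferentiableAt ℝ χ t) : deriv χ t ≤ 0 := by
  have h1 := hasDerivAt_iff_tendsto_slope.1 hd.hasDerivAt
  have h2 : Filter.Tendsto (slope χ t) (nhdsWithin t (Ioi t)) (nhds (deriv χ t)) :=
    h1.mono_left (nhdsWithin_mono _ (fun y hy => ne_of_gt hy))
  refine le_of_tendsto h2 ?_
  filter_upwards [self_mem_nhdsWithin] with y hy
  rw [slope_def_field]
  exact div_nonpos_of_nonpos_of_nonneg (by linarith [h (le_of_lt hy)]) (by linarith [(show t < y from hy).le, hy])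

private lemma deriv_eq_zero_of_lt {χ : ℝ → ℝ} (hχ1 : ∀ r ≤ (0 : ℝ), χ r = 1)
    {t : ℝ} (ht : t < 0) : deriv χ t = 0 := by
  have : χ =ᶠ[nhds t] fun _ => (1 : ℝ) := by
    filter_upwards [Iio_mem_nhds ht] with y hy
    exact hχ1 y hy.le
  rw [this.deriv_eq, deriv_const]

private lemma deriv_eq_zero_of_gt {χ : ℝ → ℝ} (hχ0 : ∀ r ≥ (1 : ℝ), χ r = 0)
    {t : ℝ} (ht : 1 < t) : deriv χ t = 0 := by
  have : χ =ᶠ[nhds t] fun _ => (0 : ℝ) := by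
    filter_upwards [Ioi_mem_nhds ht] with y hy
    exact hχ0 y hy.le
  rw [this.deriv_eq, deriv_const]

private lemma gradient_inner_eq {d : ℕ} (f : EuclideanSpace ℝ (Fin d) → ℝ)
    (x v : EuclideanSpace ℝ (Fin d)) : ⟪gradient f x, v⟫ = fderiv ℝ f x v := by
  simp [gradient, InnerProductSpace.toDual_symm_apply]

/-- Construction of a `C²` function whose derivative in the directions `γ` is
uniformly positive on `S`: patching the linear function `⟨e*, ·⟩` with a `C²`
function `φ₃` by means of a cutoff `χ` yields a `C²` function `φ` with
`⟨∇φ(x), γ(x)⟩ ≥ min(c₁, c₂) > 0` on `S`. -/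
theorem patched_lyapunov_function
    (d : ℕ) (hd : 1 ≤ d)
    (S : Set (EuclideanSpace ℝ (Fin d)))
    (estar : EuclideanSpace ℝ (Fin d)) (hestar : ‖estar‖ = 1)
    (rstar : ℝ) (hrstar : 0 < rstar)
    (γ : EuclideanSpace ℝ (Fin d) → EuclideanSpace ℝ (Fin d))
    (c₁ c₂ : ℝ) (hc₁ : 0 < c₁) (hc₂ : 0 < c₂)
    (hγ₁ : ∀ x ∈ S, ⟪estar, x⟫ ≤ 2 * rstar → c₁ ≤ ⟪estar, γ x⟫)
    (φ₃ : EuclideanSpace ℝ (Fin d) → ℝ) (hφ₃ : ContDiff ℝ 2 φ₃)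
    (hγ₂ : ∀ x ∈ S, rstar ≤ ⟪estar, x⟫ →
      c₂ ≤ ⟪gradient φ₃ x, γ x⟫ ∧ 2 * rstar ≤ φ₃ x)
    (χ : ℝ → ℝ) (hχ : ContDiff ℝ 2 χ)
    (hχ01 : ∀ r, χ r ∈ Icc (0 : ℝ) 1)
    (hχanti : Antitone χ)
    (hχ1 : ∀ r ≤ (0 : ℝ), χ r = 1) (hχ0 : ∀ r ≥ (1 : ℝ), χ r = 0) :
    ContDiff ℝ 2 (fun x : EuclideanSpace ℝ (Fin d) =>
        ⟪estar, x⟫ * χ ((⟪estar, x⟫ - rstar) / rstar)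
          + (1 - χ ((⟪estar, x⟫ - rstar) / rstar)) * φ₃ x) ∧
      (∀ x ∈ S,
        min c₁ c₂ ≤ ⟪gradient (fun x : EuclideanSpace ℝ (Fin d) =>
          ⟪estar, x⟫ * χ ((⟪estar, x⟫ - rstar) / rstar)
            + (1 - χ ((⟪estar, x⟫ - rstar) / rstar)) * φ₃ x) x, γ x⟫) ∧
      0 < min c₁ c₂ := by
  have hu : ContDiff ℝ 2 (fun x : EuclideanSpace ℝ (Fin d) => ⟪estar, x⟫) :=
    (innerSL ℝ estar).contDiff
  have hg : ContDiff ℝ 2 (fun x : EuclideanSpace ℝ (Fin d) => (⟪estar, x⟫ - rstar) / rstar) :=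
    (hu.sub contDiff_const).div_const _
  have hχg : ContDiff ℝ 2 (fun x : EuclideanSpace ℝ (Fin d) =>
      χ ((⟪estar, x⟫ - rstar) / rstar)) := hχ.comp hg
  have hsmooth : ContDiff ℝ 2 (fun x : EuclideanSpace ℝ (Fin d) =>
      ⟪estar, x⟫ * χ ((⟪estar, x⟫ - rstar) / rstar)
        + (1 - χ ((⟪estar, x⟫ - rstar) / rstar)) * φ₃ x) :=
    (hu.mul hχg).add ((contDiff_const.sub hχg).mul hφ₃)
  refine ⟨hsmooth, ?_, lt_min hc₁ hc₂⟩
  intro x hx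
  set t : ℝ := (⟪estar, x⟫ - rstar) / rstar with ht
  -- derivative computation
  have hud : HasFDerivAt (fun x : EuclideanSpace ℝ (Fin d) => ⟪estar, x⟫)
      (innerSL ℝ estar) x := (innerSL ℝ estar).hasFDerivAt
  have hgd : HasFDerivAt (fun x : EuclideanSpace ℝ (Fin d) => (⟪estar, x⟫ - rstar) / rstar)
      (rstar⁻¹ • innerSL ℝ estar) x := by
    have := (hud.sub_const rstar).const_smul (rstar⁻¹)
    exact this.congr_of_eventuallyEq (Filter.Eventually.of_forall fun y => by
      simp only [Pi.smul_apply, smul_eq_mul]; ring)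
  have hχd : HasDerivAt χ (deriv χ t) t :=
    ((hχ.differentiable two_ne_zero) t).hasDerivAt
  have hχgd : HasFDerivAt (fun x : EuclideanSpace ℝ (Fin d) =>
      χ ((⟪estar, x⟫ - rstar) / rstar))
      ((deriv χ t) • (rstar⁻¹ • innerSL ℝ estar)) x :=
    hχd.comp_hasFDerivAt x hgd
  have hφ₃d : HasFDerivAt φ₃ (fderiv ℝ φ₃ x) x :=
    ((hφ₃.differentiable two_ne_zero) x).hasFDerivAt
  have h1 : HasFDerivAt (fun x : EuclideanSpace ℝ (Fin d) =>
      ⟪estar, x⟫ * χ ((⟪estar, x⟫ - rstar) / rstar))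
      (⟪estar, x⟫ • ((deriv χ t) • (rstar⁻¹ • innerSL ℝ estar))
        + χ t • innerSL ℝ estar) x := hud.mul hχgd
  have h2 : HasFDerivAt (fun x : EuclideanSpace ℝ (Fin d) =>
      (1 - χ ((⟪estar, x⟫ - rstar) / rstar)) * φ₃ x)
      ((1 - χ t) • fderiv ℝ φ₃ x
        + φ₃ x • ((0 : EuclideanSpace ℝ (Fin d) →L[ℝ] ℝ)
          - (deriv χ t) • (rstar⁻¹ • innerSL ℝ estar))) x :=
    ((hasFDerivAt_const (1 : ℝ) x).sub hχgd).mul hφ₃d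
  have htotal := h1.add h2
  have hval : ⟪gradient (fun x : EuclideanSpace ℝ (Fin d) =>
      ⟪estar, x⟫ * χ ((⟪estar, x⟫ - rstar) / rstar)
        + (1 - χ ((⟪estar, x⟫ - rstar) / rstar)) * φ₃ x) x, γ x⟫
      = ⟪estar, x⟫ * ((deriv χ t) * (rstar⁻¹ * ⟪estar, γ x⟫))
        + χ t * ⟪estar, γ x⟫
        + ((1 - χ t) * ⟪gradient φ₃ x, γ x⟫
          + φ₃ x * (0 - (deriv χ t) * (rstar⁻¹ * ⟪estar, γ x⟫))) := by
    rw [gradient_inner_eq, gradient_inner_eq, (show HasFDerivAt (fun x : EuclideanSpace ℝ (Fin d) =>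
        ⟪estar, x⟫ * χ ((⟪estar, x⟫ - rstar) / rstar)
          + (1 - χ ((⟪estar, x⟫ - rstar) / rstar)) * φ₃ x) _ x from htotal).fderiv]
    simp only [ContinuousLinearMap.add_apply, ContinuousLinearMap.smul_apply,
      ContinuousLinearMap.sub_apply, ContinuousLinearMap.zero_apply, innerSL_apply_apply,
      smul_eq_mul]
  rw [hval]
  -- scalar analysis
  have hχt0 := (hχ01 t).1
  have hχt1 := (hχ01 t).2
  have hder : deriv χ t ≤ 0 := antitone_deriv_nonpos hχanti ((hχ.differentiable two_ne_zero) t)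
  by_cases hcase : ⟪estar, x⟫ ≤ 2 * rstar
  · have hA : c₁ ≤ ⟪estar, γ x⟫ := hγ₁ x hx hcase
    by_cases hcase2 : rstar ≤ ⟪estar, x⟫
    · obtain ⟨hB, hφ⟩ := hγ₂ x hx hcase2
      -- middle term nonneg: ⟪estar,x⟫ - φ₃ x ≤ 0, deriv ≤ 0
      have hneg : deriv χ t * (rstar⁻¹ * ⟪estar, γ x⟫) ≤ 0 :=
        mul_nonpos_of_nonpos_of_nonneg hder (mul_nonneg (by positivity) (by linarith))
      have hmid : 0 ≤ (⟪estar, x⟫ - φ₃ x) * ((deriv χ t) * (rstar⁻¹ * ⟪estar, γ x⟫)) := by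
        nlinarith
      have hcomb : min c₁ c₂ ≤ χ t * ⟪estar, γ x⟫ + (1 - χ t) * ⟪gradient φ₃ x, γ x⟫ := by
        have e1 : χ t * (min c₁ c₂) ≤ χ t * ⟪estar, γ x⟫ :=
          mul_le_mul_of_nonneg_left (le_trans (min_le_left _ _) hA) hχt0
        have e2 : (1 - χ t) * (min c₁ c₂) ≤ (1 - χ t) * ⟪gradient φ₃ x, γ x⟫ :=
          mul_le_mul_of_nonneg_left (le_trans (min_le_right _ _) hB) (by linarith)
        nlinarith
      nlinarith
    · push_neg at hcase2
      have htlt : t < 0 := by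
        rw [ht]; exact div_neg_of_neg_of_pos (by linarith) hrstar
      have hd0 : deriv χ t = 0 := deriv_eq_zero_of_lt hχ1 htlt
      have hχ1t : χ t = 1 := hχ1 t htlt.le
      rw [hd0, hχ1t]
      linarith [min_le_left c₁ c₂, hA]
  · push_neg at hcase
    have hrle : rstar ≤ ⟪estar, x⟫ := by linarith
    obtain ⟨hB, hφ⟩ := hγ₂ x hx hrle
    have htgt : 1 < t := by
      rw [ht, lt_div_iff₀ hrstar]; linarith
    have hd0 : deriv χ t = 0 := deriv_eq_zero_of_gt hχ0 htgt
    have hχ0t : χ t = 0 := hχ0 t htgt.le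
    rw [hd0, hχ0t]
    linarith [min_le_right c₁ c₂, hB]
end

section
/- Let (E, ℰ) and (F, ℱ) be measurable spaces, let P be a Markov (probability) kernel from E to F, and suppose there is β ∈ [0,1] such that ‖P(x,·) − P(y,·)‖_TV ≤ β for all x, y ∈ E. Then for any two probability measures ν, ν̃ on E, ‖νP − ν̃P‖_TV ≤ β · ‖ν − ν̃‖_TV, where (νP)(A) := ∫_E P(x, A) ν(dx) for A ∈ ℱ. -/
open MeasureTheory ProbabilityTheory

/-- The total variation distance `sup_A |μ(A) - μ'(A)|` between two measures,
the supremum being over all measurable sets. -/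
noncomputable def tvDist {E : Type*} [MeasurableSpace E] (μ μ' : Measure E) : ℝ :=
  ⨆ (A : Set E) (_ : MeasurableSet A), |(μ A).toReal - (μ' A).toReal|

lemma tvDist_nonneg {E : Type*} [MeasurableSpace E] (μ μ' : Measure E) :
    0 ≤ tvDist μ μ' :=
  Real.iSup_nonneg fun _ => Real.iSup_nonneg fun _ => abs_nonneg _

lemma tvDist_comm {E : Type*} [MeasurableSpace E] (μ μ' : Measure E) :
    tvDist μ μ' = tvDist μ' μ := by
  unfold tvDist
  exact iSup_congr fun A => iSup_congr fun _ => abs_sub_comm _ _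

lemma prob_toReal_le_one {E : Type*} [MeasurableSpace E] (μ : Measure E)
    [IsProbabilityMeasure μ] (B : Set E) : (μ B).toReal ≤ 1 := by
  have h : μ B ≤ 1 := prob_le_one
  calc (μ B).toReal ≤ (1 : ENNReal).toReal := ENNReal.toReal_mono ENNReal.one_ne_top h
    _ = 1 := by simp

lemma abs_le_tvDist {E : Type*} [MeasurableSpace E] (μ μ' : Measure E)
    [IsProbabilityMeasure μ] [IsProbabilityMeasure μ'] {A : Set E} (hA : MeasurableSet A) :
    |(μ A).toReal - (μ' A).toReal| ≤ tvDist μ μ' := by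
  have hbdd : BddAbove (Set.range fun B : Set E =>
      ⨆ _ : MeasurableSet B, |(μ B).toReal - (μ' B).toReal|) := by
    refine ⟨1, ?_⟩
    rintro x ⟨B, rfl⟩
    refine Real.iSup_le (fun _ => ?_) zero_le_one
    have h1 := prob_toReal_le_one μ B
    have h2 := prob_toReal_le_one μ' B
    have h3 : (0:ℝ) ≤ (μ B).toReal := ENNReal.toReal_nonneg
    have h4 : (0:ℝ) ≤ (μ' B).toReal := ENNReal.toReal_nonneg
    rw [abs_sub_le_iff]
    constructor <;> linarith
  calc |(μ A).toReal - (μ' A).toReal|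
      = ⨆ _ : MeasurableSet A, |(μ A).toReal - (μ' A).toReal| := (ciSup_pos (f := fun _ : MeasurableSet A => |(μ A).toReal - (μ' A).toReal|) hA).symm
    _ ≤ tvDist μ μ' := le_ciSup hbdd A

lemma key_onesided {E F : Type*} [MeasurableSpace E] [MeasurableSpace F]
    (P : Kernel E F) [IsMarkovKernel P]
    (β : ℝ) (hβ0 : 0 ≤ β)
    (hP : ∀ x y : E, tvDist (P x) (P y) ≤ β)
    (ν ν' : Measure E) [IsProbabilityMeasure ν] [IsProbabilityMeasure ν']
    {A : Set F} (hA : MeasurableSet A) :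
    ((ν.bind fun x => P x) A).toReal - ((ν'.bind fun x => P x) A).toReal
      ≤ β * tvDist ν ν' := by
  have hne : Nonempty E := by
    rcases isEmpty_or_nonempty E with h | h
    · have hu : (Set.univ : Set E) = ∅ := Set.univ_eq_empty_iff.2 h
      have : ν Set.univ = 1 := measure_univ
      rw [hu] at this
      simp at this
    · exact h
  obtain ⟨S, hS, h1, h2⟩ := hahn_decomposition (μ := ν) (ν := ν')
  set f : E → ENNReal := fun x => P x A with hf
  have hfm : Measurable f := Kernel.measurable_coe P hA
  have hf1 : ∀ x, f x ≤ 1 := fun x => prob_le_one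
  set g : E → ℝ := fun x => (f x).toReal with hg
  have hgA : BddAbove (Set.range g) := by
    refine ⟨1, ?_⟩
    rintro x ⟨y, rfl⟩
    exact prob_toReal_le_one (P y) A
  have hgB : BddBelow (Set.range g) := by
    refine ⟨0, ?_⟩
    rintro x ⟨y, rfl⟩
    exact ENNReal.toReal_nonneg
  set M : ℝ := ⨆ x, g x with hM
  set m : ℝ := ⨅ x, g x with hm
  have hM0 : 0 ≤ M := Real.iSup_nonneg fun x => ENNReal.toReal_nonneg
  have hm0 : 0 ≤ m := le_ciInf fun x => ENNReal.toReal_nonneg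
  have hMm : M - m ≤ β := by
    have hxy : ∀ x y : E, g x - g y ≤ β := fun x y => by
      have h := (abs_le_tvDist (P x) (P y) hA).trans (hP x y)
      have := le_abs_self ((P x A).toReal - (P y A).toReal)
      simp only [hg, hf]
      linarith
    have hMle : M ≤ β + m := ciSup_le fun x => by
      have : g x - β ≤ m := le_ciInf fun y => by linarith [hxy x y]
      linarith
    linarith
  -- Hahn decomposition measures
  have hρle : ν'.restrict S ≤ ν.restrict S := Measure.le_iff.2 fun t ht => by
    rw [Measure.restrict_apply ht, Measure.restrict_apply ht]
    exact h1 _ (ht.inter hS) Set.inter_subset_right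
  have hσle : ν.restrict Sᶜ ≤ ν'.restrict Sᶜ := Measure.le_iff.2 fun t ht => by
    rw [Measure.restrict_apply ht, Measure.restrict_apply ht]
    exact h2 _ (ht.inter hS.compl) Set.inter_subset_right
  set ρ : Measure E := ν.restrict S - ν'.restrict S with hρdef
  set σ : Measure E := ν'.restrict Sᶜ - ν.restrict Sᶜ with hσdef
  have hρ : ρ + ν'.restrict S = ν.restrict S := Measure.sub_add_cancel_of_le hρle
  have hσ : σ + ν.restrict Sᶜ = ν'.restrict Sᶜ := Measure.sub_add_cancel_of_le hσle
  have hρu : ρ Set.univ + ν' S = ν S := by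
    have h := congrArg (fun μ : Measure E => μ Set.univ) hρ
    simpa [Measure.add_apply, Measure.restrict_apply_univ] using h
  have hσu : σ Set.univ + ν Sᶜ = ν' Sᶜ := by
    have h := congrArg (fun μ : Measure E => μ Set.univ) hσ
    simpa [Measure.add_apply, Measure.restrict_apply_univ] using h
  have hρufin : ρ Set.univ ≠ ⊤ := by
    have : ρ Set.univ ≤ ν S := hρu ▸ le_self_add
    exact (this.trans_lt (measure_lt_top ν S)).ne
  have hσufin : σ Set.univ ≠ ⊤ := by
    have : σ Set.univ ≤ ν' Sᶜ := hσu ▸ le_self_add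
    exact (this.trans_lt (measure_lt_top ν' Sᶜ)).ne
  -- real values
  set a : ℝ := (ν S).toReal with ha
  set a' : ℝ := (ν' S).toReal with ha'
  have hδρ : (ρ Set.univ).toReal = a - a' := by
    have h := congrArg ENNReal.toReal hρu
    rw [ENNReal.toReal_add hρufin (measure_ne_top _ _)] at h
    simp only [ha, ha']
    linarith
  have hcompl : ∀ (μ : Measure E), IsProbabilityMeasure μ → (μ Sᶜ).toReal = 1 - (μ S).toReal := by
    intro μ hμ
    have h := prob_compl_eq_one_sub (μ := μ) hS
    rw [h, ENNReal.toReal_sub_of_le prob_le_one ENNReal.one_ne_top]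
    simp
  have hδσ : (σ Set.univ).toReal = a - a' := by
    have h := congrArg ENNReal.toReal hσu
    rw [ENNReal.toReal_add hσufin (measure_ne_top _ _)] at h
    rw [hcompl ν inferInstance, hcompl ν' inferInstance] at h
    simp only [ha, ha']
    linarith
  have hδ0 : 0 ≤ a - a' := hδρ ▸ ENNReal.toReal_nonneg
  -- lintegral bounds
  have hfin : ∀ μ : Measure E, ∫⁻ x, f x ∂μ ≤ μ Set.univ := fun μ => by
    calc ∫⁻ x, f x ∂μ ≤ ∫⁻ _, 1 ∂μ := lintegral_mono hf1
      _ = μ Set.univ := lintegral_one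
  have hfinρ : ∫⁻ x, f x ∂ρ ≠ ⊤ := ((hfin ρ).trans_lt (lt_top_iff_ne_top.2 hρufin)).ne
  have hfinσ : ∫⁻ x, f x ∂σ ≠ ⊤ := ((hfin σ).trans_lt (lt_top_iff_ne_top.2 hσufin)).ne
  have hfinS : ∫⁻ x, f x ∂(ν'.restrict S) + ∫⁻ x, f x ∂(ν.restrict Sᶜ) ≠ ⊤ := by
    have h1' : ∫⁻ x, f x ∂(ν'.restrict S) ≤ ν' S := by
      simpa [Measure.restrict_apply_univ] using hfin (ν'.restrict S)
    have h2' : ∫⁻ x, f x ∂(ν.restrict Sᶜ) ≤ ν Sᶜ := by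
      simpa [Measure.restrict_apply_univ] using hfin (ν.restrict Sᶜ)
    exact ENNReal.add_ne_top.2 ⟨(h1'.trans_lt (measure_lt_top _ _)).ne,
      (h2'.trans_lt (measure_lt_top _ _)).ne⟩
  -- decompositions of bind
  have hbind : (ν.bind fun x => P x) A
      = ∫⁻ x, f x ∂ρ + (∫⁻ x, f x ∂(ν'.restrict S) + ∫⁻ x, f x ∂(ν.restrict Sᶜ)) := by
    rw [Measure.bind_apply hA (Kernel.measurable P).aemeasurable]
    conv_lhs => rw [← Measure.restrict_add_restrict_compl (μ := ν) hS]
    rw [lintegral_add_measure, ← hρ, lintegral_add_measure]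
    ring
  have hbind' : (ν'.bind fun x => P x) A
      = ∫⁻ x, f x ∂σ + (∫⁻ x, f x ∂(ν'.restrict S) + ∫⁻ x, f x ∂(ν.restrict Sᶜ)) := by
    rw [Measure.bind_apply hA (Kernel.measurable P).aemeasurable]
    conv_lhs => rw [← Measure.restrict_add_restrict_compl (μ := ν') hS]
    rw [lintegral_add_measure, ← hσ, lintegral_add_measure]
    ring
  have hdiff : ((ν.bind fun x => P x) A).toReal - ((ν'.bind fun x => P x) A).toReal
      = (∫⁻ x, f x ∂ρ).toReal - (∫⁻ x, f x ∂σ).toReal := by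
    rw [hbind, hbind', ENNReal.toReal_add hfinρ hfinS, ENNReal.toReal_add hfinσ hfinS]
    ring
  -- bound ∫ f dρ from above
  have hIρ : (∫⁻ x, f x ∂ρ).toReal ≤ M * (a - a') := by
    have hle : ∫⁻ x, f x ∂ρ ≤ ENNReal.ofReal M * ρ Set.univ := by
      calc ∫⁻ x, f x ∂ρ ≤ ∫⁻ _, ENNReal.ofReal M ∂ρ := by
            refine lintegral_mono fun x => ?_
            rw [← ENNReal.ofReal_toReal ((hf1 x).trans_lt ENNReal.one_lt_top).ne]
            exact ENNReal.ofReal_le_ofReal (le_ciSup hgA x)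
        _ = ENNReal.ofReal M * ρ Set.univ := lintegral_const _
    have hne' : ENNReal.ofReal M * ρ Set.univ ≠ ⊤ :=
      ENNReal.mul_ne_top ENNReal.ofReal_ne_top hρufin
    calc (∫⁻ x, f x ∂ρ).toReal ≤ (ENNReal.ofReal M * ρ Set.univ).toReal :=
          ENNReal.toReal_mono hne' hle
      _ = M * (a - a') := by
          rw [ENNReal.toReal_mul, ENNReal.toReal_ofReal hM0, hδρ]
  -- bound ∫ f dσ from below
  have hIσ : m * (a - a') ≤ (∫⁻ x, f x ∂σ).toReal := by
    have hle : ENNReal.ofReal m * σ Set.univ ≤ ∫⁻ x, f x ∂σ := by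
      calc ENNReal.ofReal m * σ Set.univ = ∫⁻ _, ENNReal.ofReal m ∂σ := (lintegral_const _).symm
        _ ≤ ∫⁻ x, f x ∂σ := by
            refine lintegral_mono fun x => ?_
            rw [← ENNReal.ofReal_toReal ((hf1 x).trans_lt ENNReal.one_lt_top).ne]
            exact ENNReal.ofReal_le_ofReal (ciInf_le hgB x)
    calc m * (a - a') = (ENNReal.ofReal m * σ Set.univ).toReal := by
          rw [ENNReal.toReal_mul, ENNReal.toReal_ofReal hm0, hδσ]
      _ ≤ (∫⁻ x, f x ∂σ).toReal := ENNReal.toReal_mono hfinσ hle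
  have htv : a - a' ≤ tvDist ν ν' :=
    (le_abs_self _).trans (abs_le_tvDist ν ν' hS)
  calc ((ν.bind fun x => P x) A).toReal - ((ν'.bind fun x => P x) A).toReal
      = (∫⁻ x, f x ∂ρ).toReal - (∫⁻ x, f x ∂σ).toReal := hdiff
    _ ≤ M * (a - a') - m * (a - a') := by linarith
    _ = (M - m) * (a - a') := by ring
    _ ≤ β * (a - a') := mul_le_mul_of_nonneg_right hMm hδ0
    _ ≤ β * tvDist ν ν' := mul_le_mul_of_nonneg_left htv hβ0

/-- If a Markov kernel `P` from `E` to `F` satisfies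
`‖P(x, ·) - P(y, ·)‖_TV ≤ β` for all `x, y ∈ E`, then for any two probability
measures `ν, ν'` on `E`, `‖νP - ν'P‖_TV ≤ β ‖ν - ν'‖_TV`. -/
theorem tvDist_bind_le_of_kernel_tvDist_le
    {E F : Type*} [MeasurableSpace E] [MeasurableSpace F]
    (P : Kernel E F) [IsMarkovKernel P]
    (β : ℝ) (hβ0 : 0 ≤ β) (hβ1 : β ≤ 1)
    (hP : ∀ x y : E, tvDist (P x) (P y) ≤ β)
    (ν ν' : Measure E) [IsProbabilityMeasure ν] [IsProbabilityMeasure ν'] :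
    tvDist (ν.bind fun x => P x) (ν'.bind fun x => P x) ≤ β * tvDist ν ν' := by
  have hnn : 0 ≤ β * tvDist ν ν' := mul_nonneg hβ0 (tvDist_nonneg ν ν')
  refine Real.iSup_le (fun A => Real.iSup_le (fun hA => ?_) hnn) hnn
  rw [abs_sub_le_iff]
  constructor
  · exact key_onesided P β hβ0 hP ν ν' hA
  · have h := key_onesided P β hβ0 hP ν' ν hA
    rwa [tvDist_comm ν' ν] at h
end
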